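/- arXiv:2408.09170 — 4 statements merged into one kernel-verified Lean document; each statement's English description precedes it below -/
import Mathlib

section
/- Let η ∈ C^1_c(ℝ^N) with η = 1 on B_1, η = 0 outside B_2, 0 ≤ η ≤ 1 and ‖∇η‖_∞ ≤ 2. For k ∈ ℕ set η_k(x) = η(x/k) and u_k = η_k u. Then [u_k]^i_{s,p,δ} ≤ 2^{p−1} [u]^i_{s,p,δ} + (2^{2p} δ^{p(1−s)} / (k^p p(1−s))) ‖u‖_{L^p}^p. -/
open MeasureTheory Real Filter Topology
open scoped ENNReal

noncomputable section

/-- The i-th standard basis vector of `ℝ^N`. -/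
def stdBasis (N : ℕ) (i : Fin N) : Fin N → ℝ := Pi.single i 1

/-- The truncated (peridynamic) directional fractional Gagliardo seminorm
`[u]^i_{s,p,δ} = ∫_{ℝ^N} ∫_{|h|≤δ} |u(x+h e_i) − u(x)|^p / |h|^{1+sp} dh dx`. -/
def periSeminorm (N : ℕ) (i : Fin N) (s p δ : ℝ) (u : (Fin N → ℝ) → ℝ) : ℝ≥0∞ :=
  ∫⁻ x : Fin N → ℝ, ∫⁻ h in Set.Icc (-δ) δ,
    ENNReal.ofReal (|u (x + h • stdBasis N i) - u x| ^ p / |h| ^ (1 + s * p))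

private lemma two_rpow_add_le (a b p : ℝ) (ha : 0 ≤ a) (hb : 0 ≤ b) (hp : 1 ≤ p) :
    (a + b) ^ p ≤ 2 ^ (p - 1) * (a ^ p + b ^ p) := by
  have h := NNReal.rpow_add_le_mul_rpow_add_rpow a.toNNReal b.toNNReal hp
  rw [← Real.toNNReal_add ha hb] at h
  have h2 := (NNReal.coe_le_coe).2 h
  push_cast [Real.coe_toNNReal _ (by positivity : (0:ℝ) ≤ a + b),
    Real.coe_toNNReal _ ha, Real.coe_toNNReal _ hb] at h2
  exact h2

private lemma lint_abs_rpow_Icc (q δ : ℝ) (hq : -1 < q) (hδ : 0 < δ) :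
    ∫⁻ h in Set.Icc 0 δ, ENNReal.ofReal (|h| ^ q) = ENNReal.ofReal (δ ^ (q+1) / (q+1)) := by
  have hq1 : 0 < q + 1 := by linarith
  rw [← Measure.restrict_congr_set Ioc_ae_eq_Icc]
  rw [setLIntegral_congr_fun measurableSet_Ioc
    (fun h hh => by rw [abs_of_pos hh.1])]
  have hInt : IntegrableOn (fun h : ℝ => h ^ q) (Set.Ioc 0 δ) := by
    rw [← intervalIntegrable_iff_integrableOn_Ioc_of_le hδ.le]
    exact intervalIntegral.intervalIntegrable_rpow' hq
  rw [← ofReal_integral_eq_lintegral_ofReal hInt]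
  · congr 1
    rw [← intervalIntegral.integral_of_le hδ.le, integral_rpow (Or.inl hq),
      Real.zero_rpow (ne_of_gt hq1)]
    ring
  · filter_upwards [self_mem_ae_restrict measurableSet_Ioc] with h hh
    exact Real.rpow_nonneg hh.1.le q

theorem periSeminorm_truncation_le (N : ℕ) (hN : 1 ≤ N) (i : Fin N)
    (p s δ : ℝ) (hp : 1 < p) (hs : 0 < s) (hs1 : s < 1) (hδ : 0 < δ)
    (u : (Fin N → ℝ) → ℝ) (hu : MemLp u (ENNReal.ofReal p) volume)
    (hufin : periSeminorm N i s p δ u < ⊤)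
    (η : (Fin N → ℝ) → ℝ) (hη : ContDiff ℝ 1 η) (hηcpt : HasCompactSupport η)
    (hη1 : ∀ x ∈ Metric.ball (0 : Fin N → ℝ) 1, η x = 1)
    (hη0 : ∀ x ∉ Metric.ball (0 : Fin N → ℝ) 2, η x = 0)
    (hη01 : ∀ x, 0 ≤ η x ∧ η x ≤ 1)
    (hηgrad : ∀ x, ‖fderiv ℝ η x‖ ≤ 2)
    (k : ℕ) (hk : 0 < k) :
    periSeminorm N i s p δ (fun x => η ((k : ℝ)⁻¹ • x) * u x) ≤
      ENNReal.ofReal (2 ^ (p - 1)) * periSeminorm N i s p δ u +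
        ENNReal.ofReal (2 ^ (2 * p) * δ ^ (p * (1 - s)) / ((k : ℝ) ^ p * p * (1 - s)) *
          ∫ x : Fin N → ℝ, |u x| ^ p) := by
  have hp0 : 0 < p := lt_trans one_pos hp
  have hk0 : (0:ℝ) < (k : ℝ) := Nat.cast_pos.mpr hk
  have h1s : (0:ℝ) < 1 - s := by linarith
  set e : Fin N → ℝ := stdBasis N i with he_def
  have he : ‖e‖ = 1 := by rw [he_def, stdBasis, Pi.norm_single, norm_one]
  set q : ℝ := p - 1 - s * p with hq_def
  have hq : -1 < q := by nlinarith [mul_pos hp0 h1s]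
  have hq1 : 0 < q + 1 := by linarith
  set c2 : ℝ := 2 ^ (p - 1) * (2 / (k:ℝ)) ^ p with hc2_def
  have hc2_nn : 0 ≤ c2 := by positivity
  -- Lipschitz bound on η
  have hlip : ∀ a b : Fin N → ℝ, |η a - η b| ≤ 2 * ‖a - b‖ := by
    intro a b
    have := (convex_univ :
        Convex ℝ (Set.univ : Set (Fin N → ℝ))).norm_image_sub_le_of_norm_fderiv_le
      (fun x _ => (hη.differentiable one_ne_zero).differentiableAt) (fun x _ => hηgrad x)
      (Set.mem_univ b) (Set.mem_univ a)
    simpa [Real.norm_eq_abs] using this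
  -- key pointwise inequality
  have key : ∀ (x : Fin N → ℝ) (h : ℝ), h ≠ 0 →
      |η ((k : ℝ)⁻¹ • (x + h • e)) * u (x + h • e) - η ((k : ℝ)⁻¹ • x) * u x| ^ p
          / |h| ^ (1 + s * p) ≤
        2 ^ (p - 1) * (|u (x + h • e) - u x| ^ p / |h| ^ (1 + s * p))
          + c2 * |u x| ^ p * |h| ^ q := by
    intro x h hne
    have hh : 0 < |h| := abs_pos.mpr hne
    set a := |u (x + h • e) - u x| with ha_def
    set b := 2 / (k:ℝ) * |h| * |u x| with hb_def
    have ha_nn : 0 ≤ a := abs_nonneg _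
    have hb_nn : 0 ≤ b := by positivity
    have hab : |η ((k : ℝ)⁻¹ • (x + h • e)) * u (x + h • e) - η ((k : ℝ)⁻¹ • x) * u x|
        ≤ a + b := by
      have hd : η ((k : ℝ)⁻¹ • (x + h • e)) * u (x + h • e) - η ((k : ℝ)⁻¹ • x) * u x =
          η ((k : ℝ)⁻¹ • (x + h • e)) * (u (x + h • e) - u x)
            + (η ((k : ℝ)⁻¹ • (x + h • e)) - η ((k : ℝ)⁻¹ • x)) * u x := by ring
      rw [hd]
      refine (abs_add_le _ _).trans (add_le_add ?_ ?_)
      · rw [abs_mul, ← ha_def]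
        exact mul_le_of_le_one_left ha_nn
          (abs_le.mpr ⟨by linarith [(hη01 ((k : ℝ)⁻¹ • (x + h • e))).1],
            (hη01 ((k : ℝ)⁻¹ • (x + h • e))).2⟩)
      · rw [abs_mul]
        have hdiff : (k : ℝ)⁻¹ • (x + h • e) - (k : ℝ)⁻¹ • x = (k : ℝ)⁻¹ • (h • e) := by
          rw [← smul_sub, add_sub_cancel_left]
        have hnorm : ‖(k : ℝ)⁻¹ • (x + h • e) - (k : ℝ)⁻¹ • x‖ = (k:ℝ)⁻¹ * |h| := by
          rw [hdiff, norm_smul, norm_smul, he, Real.norm_eq_abs, Real.norm_eq_abs,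
            abs_of_pos (inv_pos.mpr hk0), mul_one]
        have := hlip ((k : ℝ)⁻¹ • (x + h • e)) ((k : ℝ)⁻¹ • x)
        rw [hnorm] at this
        calc |η ((k : ℝ)⁻¹ • (x + h • e)) - η ((k : ℝ)⁻¹ • x)| * |u x|
            ≤ 2 * ((k:ℝ)⁻¹ * |h|) * |u x| :=
              mul_le_mul_of_nonneg_right this (abs_nonneg _)
          _ = b := by rw [hb_def]; field_simp
    have hstep : |η ((k : ℝ)⁻¹ • (x + h • e)) * u (x + h • e) - η ((k : ℝ)⁻¹ • x) * u x| ^ p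
        ≤ 2 ^ (p - 1) * (a ^ p + b ^ p) :=
      (Real.rpow_le_rpow (abs_nonneg _) hab hp0.le).trans
        (two_rpow_add_le a b p ha_nn hb_nn hp.le)
    have hbp : b ^ p = (2 / (k:ℝ)) ^ p * |h| ^ p * |u x| ^ p := by
      rw [hb_def, Real.mul_rpow (by positivity) (abs_nonneg _),
        Real.mul_rpow (by positivity) hh.le]
    have hpow : |h| ^ p / |h| ^ (1 + s * p) = |h| ^ q := by
      rw [hq_def, show p - 1 - s * p = p - (1 + s * p) by ring, Real.rpow_sub hh]
    have hhpos : 0 < |h| ^ (1 + s * p) := Real.rpow_pos_of_pos hh _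
    calc |η ((k : ℝ)⁻¹ • (x + h • e)) * u (x + h • e) - η ((k : ℝ)⁻¹ • x) * u x| ^ p
          / |h| ^ (1 + s * p)
        ≤ 2 ^ (p - 1) * (a ^ p + b ^ p) / |h| ^ (1 + s * p) :=
          (div_le_div_iff_of_pos_right hhpos).mpr hstep
      _ = 2 ^ (p - 1) * (a ^ p / |h| ^ (1 + s * p)) + c2 * |u x| ^ p * |h| ^ q := by
          rw [hbp, hc2_def, ← hpow]
          field_simp
          try ring
  -- inner integral of |h|^q
  set J : ℝ≥0∞ := ∫⁻ h in Set.Icc (-δ) δ, ENNReal.ofReal (|h| ^ q) with hJ_def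
  have hpos_part : ∫⁻ h in Set.Icc 0 δ, ENNReal.ofReal (|h| ^ q)
      = ENNReal.ofReal (δ ^ (q+1) / (q+1)) := lint_abs_rpow_Icc q δ hq hδ
  have hneg_part : ∫⁻ h in Set.Icc (-δ) 0, ENNReal.ofReal (|h| ^ q)
      = ENNReal.ofReal (δ ^ (q+1) / (q+1)) := by
    rw [show Set.Icc (-δ) (0:ℝ) = Neg.neg '' Set.Icc 0 δ by
        rw [Set.image_neg_Icc]; simp]
    rw [← (Measure.measurePreserving_neg volume).setLIntegral_comp_emb
      (MeasurableEquiv.neg ℝ).measurableEmbedding (fun h => ENNReal.ofReal (|h| ^ q))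
      (Set.Icc 0 δ)]
    simp only [abs_neg]
    exact hpos_part
  have hJ : J ≤ ENNReal.ofReal (2 * δ ^ (q+1) / (q+1)) := by
    calc J ≤ ∫⁻ h in Set.Icc (-δ) 0 ∪ Set.Icc 0 δ, ENNReal.ofReal (|h| ^ q) := by
          refine lintegral_mono_set fun h hh => ?_
          rcases le_total h 0 with h0 | h0
          · exact Or.inl ⟨hh.1, h0⟩
          · exact Or.inr ⟨h0, hh.2⟩
      _ ≤ (∫⁻ h in Set.Icc (-δ) 0, ENNReal.ofReal (|h| ^ q))
            + ∫⁻ h in Set.Icc 0 δ, ENNReal.ofReal (|h| ^ q) := lintegral_union_le _ _ _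
      _ = ENNReal.ofReal (2 * δ ^ (q+1) / (q+1)) := by
          rw [hpos_part, hneg_part, ← ENNReal.ofReal_add (by positivity) (by positivity)]
          congr 1
          ring
  have hJtop : J ≠ ⊤ := ne_top_of_le_ne_top ENNReal.ofReal_ne_top hJ
  -- inner inequality, per x
  have inner : ∀ x : Fin N → ℝ,
      (∫⁻ h in Set.Icc (-δ) δ, ENNReal.ofReal
        (|η ((k : ℝ)⁻¹ • (x + h • e)) * u (x + h • e) - η ((k : ℝ)⁻¹ • x) * u x| ^ p
          / |h| ^ (1 + s * p)))
      ≤ ENNReal.ofReal (2 ^ (p - 1)) * (∫⁻ h in Set.Icc (-δ) δ,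
            ENNReal.ofReal (|u (x + h • e) - u x| ^ p / |h| ^ (1 + s * p)))
        + ENNReal.ofReal (c2 * |u x| ^ p) * J := by
    intro x
    have h0 : ∀ᵐ h : ℝ ∂(volume.restrict (Set.Icc (-δ) δ)), h ≠ 0 := by
      refine ae_restrict_of_ae ?_
      refine ae_iff.mpr ?_
      simp only [not_not, Set.setOf_eq_eq_singleton]
      exact measure_singleton 0
    calc (∫⁻ h in Set.Icc (-δ) δ, ENNReal.ofReal
          (|η ((k : ℝ)⁻¹ • (x + h • e)) * u (x + h • e) - η ((k : ℝ)⁻¹ • x) * u x| ^ p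
            / |h| ^ (1 + s * p)))
        ≤ ∫⁻ h in Set.Icc (-δ) δ,
            (ENNReal.ofReal (2 ^ (p - 1)) *
              ENNReal.ofReal (|u (x + h • e) - u x| ^ p / |h| ^ (1 + s * p))
            + ENNReal.ofReal (c2 * |u x| ^ p) * ENNReal.ofReal (|h| ^ q)) := by
          refine lintegral_mono_ae ?_
          filter_upwards [h0] with h hne
          rw [← ENNReal.ofReal_mul (by positivity), ← ENNReal.ofReal_mul (by positivity),
            ← ENNReal.ofReal_add (by positivity) (by positivity)]
          exact ENNReal.ofReal_le_ofReal (key x h hne)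
      _ = ENNReal.ofReal (2 ^ (p - 1)) * (∫⁻ h in Set.Icc (-δ) δ,
            ENNReal.ofReal (|u (x + h • e) - u x| ^ p / |h| ^ (1 + s * p)))
          + ENNReal.ofReal (c2 * |u x| ^ p) * J := by
          rw [lintegral_add_right' _
              (show AEMeasurable (fun h : ℝ => ENNReal.ofReal (c2 * |u x| ^ p) *
                  ENNReal.ofReal (|h| ^ q)) _ from (measurable_const.mul
                ((measurable_abs.pow measurable_const).ennreal_ofReal)).aemeasurable),
            lintegral_const_mul' _ _ ENNReal.ofReal_ne_top,
            lintegral_const_mul' _ _ ENNReal.ofReal_ne_top]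
  -- integrability of |u|^p
  have hIu : Integrable (fun x : Fin N → ℝ => |u x| ^ p) := by
    have := hu.integrable_norm_rpow (by simp [ENNReal.ofReal_eq_zero]; linarith)
      ENNReal.ofReal_ne_top
    simpa [Real.norm_eq_abs, ENNReal.toReal_ofReal hp0.le] using this
  have hIu_nn : 0 ≤ ∫ x : Fin N → ℝ, |u x| ^ p :=
    integral_nonneg fun x => Real.rpow_nonneg (abs_nonneg _) _
  -- put everything together
  have houter : AEMeasurable (fun x : Fin N → ℝ => ENNReal.ofReal (c2 * |u x| ^ p) * J) := by
    exact ((aemeasurable_const.mul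
      (((measurable_abs.comp_aemeasurable hu.1.aemeasurable).pow aemeasurable_const))).ennreal_ofReal).mul_const J
  simp only [periSeminorm]
  calc (∫⁻ x : Fin N → ℝ, ∫⁻ h in Set.Icc (-δ) δ, ENNReal.ofReal
        (|η ((k : ℝ)⁻¹ • (x + h • e)) * u (x + h • e) - η ((k : ℝ)⁻¹ • x) * u x| ^ p
          / |h| ^ (1 + s * p)))
      ≤ ∫⁻ x : Fin N → ℝ,
          (ENNReal.ofReal (2 ^ (p - 1)) * (∫⁻ h in Set.Icc (-δ) δ,
            ENNReal.ofReal (|u (x + h • e) - u x| ^ p / |h| ^ (1 + s * p)))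
          + ENNReal.ofReal (c2 * |u x| ^ p) * J) := lintegral_mono inner
    _ = ENNReal.ofReal (2 ^ (p - 1)) * (∫⁻ x : Fin N → ℝ, ∫⁻ h in Set.Icc (-δ) δ,
            ENNReal.ofReal (|u (x + h • e) - u x| ^ p / |h| ^ (1 + s * p)))
        + (∫⁻ x : Fin N → ℝ, ENNReal.ofReal (c2 * |u x| ^ p)) * J := by
        rw [lintegral_add_right' _ houter, lintegral_const_mul' _ _ ENNReal.ofReal_ne_top,
          lintegral_mul_const' _ _ hJtop]
    _ ≤ ENNReal.ofReal (2 ^ (p - 1)) * (∫⁻ x : Fin N → ℝ, ∫⁻ h in Set.Icc (-δ) δ,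
            ENNReal.ofReal (|u (x + h • e) - u x| ^ p / |h| ^ (1 + s * p)))
        + ENNReal.ofReal (2 ^ (2 * p) * δ ^ (p * (1 - s)) / ((k : ℝ) ^ p * p * (1 - s)) *
            ∫ x : Fin N → ℝ, |u x| ^ p) := by
        refine add_le_add (le_refl _) ?_
        have h1 : (∫⁻ x : Fin N → ℝ, ENNReal.ofReal (c2 * |u x| ^ p))
            = ENNReal.ofReal (c2 * ∫ x : Fin N → ℝ, |u x| ^ p) := by
          simp_rw [ENNReal.ofReal_mul hc2_nn]
          rw [lintegral_const_mul' _ _ ENNReal.ofReal_ne_top,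
            ← ofReal_integral_eq_lintegral_ofReal hIu
              (ae_of_all _ fun x => Real.rpow_nonneg (abs_nonneg _) _),
            ← ENNReal.ofReal_mul hc2_nn]
        rw [h1]
        calc ENNReal.ofReal (c2 * ∫ x : Fin N → ℝ, |u x| ^ p) * J
            ≤ ENNReal.ofReal (c2 * ∫ x : Fin N → ℝ, |u x| ^ p) *
                ENNReal.ofReal (2 * δ ^ (q+1) / (q+1)) := mul_le_mul_right hJ _
          _ = ENNReal.ofReal (2 ^ (2 * p) * δ ^ (p * (1 - s)) / ((k : ℝ) ^ p * p * (1 - s)) *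
                ∫ x : Fin N → ℝ, |u x| ^ p) := by
              rw [← ENNReal.ofReal_mul (by positivity)]
              congr 1
              have hq1eq : q + 1 = p * (1 - s) := by rw [hq_def]; ring
              have h2p : (2:ℝ) ^ (2*p) = 2 ^ p * 2 ^ p := by
                rw [show 2*p = p + p by ring, Real.rpow_add two_pos]
              have h2p1 : (2:ℝ) ^ (p-1) = 2 ^ p / 2 := by
                rw [Real.rpow_sub two_pos, Real.rpow_one]
              have hdk : (2/(k:ℝ)) ^ p = 2 ^ p / (k:ℝ) ^ p := Real.div_rpow (by norm_num) hk0.le p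
              rw [hc2_def, hq1eq, hdk, h2p1, h2p]
              have hkp : ((k:ℝ)) ^ p ≠ 0 := by positivity
              have hps : p * (1-s) ≠ 0 := ne_of_gt (mul_pos hp0 h1s)
              field_simp
end
end

section
/- Let u ∈ C^2_c(ℝ^N), 0 < s < 1, 1 < p < ∞. Then lim_{δ→0^+} δ^{−p(1−s)} ∫_{ℝ^N} ∫_{|h|≤δ} |u(x+h e_i) − u(x)|^p |h|^{−1−sp} dh dx = (2/(p(1−s))) ∫_{ℝ^N} |∂_i u(x)|^p dx. -/
open MeasureTheory Real Filter Topology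
open scoped ENNReal

noncomputable section

lemma BBM.absII {q : ℝ} (hq : 0 < q) (b c : ℝ) :
    IntervalIntegrable (fun h : ℝ => |h| ^ (q - 1)) volume b c := by
  have hq1 : (-1:ℝ) < q - 1 := by linarith
  suffices H : ∀ d : ℝ, 0 ≤ d → IntervalIntegrable (fun h : ℝ => |h| ^ (q - 1)) volume 0 d by
    have Hneg : ∀ d : ℝ, d ≤ 0 → IntervalIntegrable (fun h : ℝ => |h| ^ (q - 1)) volume 0 d := by
      intro d hd
      have h2 := (IntervalIntegrable.iff_comp_neg (by simp)).mp (H (-d) (by linarith))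
      simp only [abs_neg, neg_neg, neg_zero] at h2
      exact h2
    rcases le_total 0 b with hb | hb <;> rcases le_total 0 c with hc | hc
    · exact (H b hb).symm.trans (H c hc)
    · exact (H b hb).symm.trans (Hneg c hc)
    · exact (Hneg b hb).symm.trans (H c hc)
    · exact (Hneg b hb).symm.trans (Hneg c hc)
  intro d hd
  refine (intervalIntegral.intervalIntegrable_rpow' hq1 (a := 0) (b := d)).congr_ae ?_
  filter_upwards [ae_restrict_mem measurableSet_uIoc] with x hx
  rw [Set.uIoc_of_le hd] at hx
  rw [abs_of_pos hx.1]

lemma BBM.inner_int {q δ : ℝ} (hq : 0 < q) (hδ : 0 < δ) :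
    ∫ h in Set.Icc (-δ) δ, |h| ^ (q - 1) = 2 * δ ^ q / q := by
  have h1 : ∫ h in Set.Icc (-δ) δ, |h| ^ (q - 1)
      = ∫ h in (-δ)..δ, |h| ^ (q - 1) := by
    rw [intervalIntegral.integral_of_le (by linarith), integral_Icc_eq_integral_Ioc]
  rw [h1, ← intervalIntegral.integral_add_adjacent_intervals (b := 0)
    (BBM.absII hq (-δ) 0) (BBM.absII hq 0 δ)]
  have h2 : ∫ h in (-δ)..(0:ℝ), |h| ^ (q - 1) = ∫ h in (0:ℝ)..δ, |h| ^ (q - 1) := by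
    have := intervalIntegral.integral_comp_neg (a := -(0:ℝ)) (b := -(-δ))
      (f := fun h : ℝ => |h| ^ (q - 1))
    simp only [neg_neg, neg_zero] at this
    rw [← this]
    simp [abs_neg]
  have h3 : ∫ h in (0:ℝ)..δ, |h| ^ (q - 1) = δ ^ q / q := by
    rw [show (∫ h in (0:ℝ)..δ, |h| ^ (q - 1)) = ∫ h in (0:ℝ)..δ, h ^ (q - 1) from
      intervalIntegral.integral_congr (fun x hx => by
        rw [Set.uIcc_of_le hδ.le] at hx; rw [abs_of_nonneg hx.1])]
    rw [integral_rpow (Or.inl (by linarith))]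
    rw [Real.zero_rpow (by linarith), sub_add_cancel, sub_zero]
  rw [h2, h3]; ring

lemma BBM.inner_lint {q δ a : ℝ} (hq : 0 < q) (hδ : 0 < δ) (ha : 0 ≤ a) :
    ∫⁻ h in Set.Icc (-δ) δ, ENNReal.ofReal (a * |h| ^ (q - 1)) =
      ENNReal.ofReal (a * (2 * δ ^ q / q)) := by
  have hint : IntegrableOn (fun h : ℝ => a * |h| ^ (q - 1)) (Set.Icc (-δ) δ) := by
    rw [integrableOn_Icc_iff_integrableOn_Ioc]
    exact (intervalIntegrable_iff_integrableOn_Ioc_of_le (by linarith)).mp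
      ((BBM.absII hq (-δ) δ).const_mul a)
  rw [← ofReal_integral_eq_lintegral_ofReal hint
    (ae_of_all _ fun h => mul_nonneg ha (Real.rpow_nonneg (abs_nonneg _) _))]
  rw [integral_const_mul, BBM.inner_int hq hδ]

lemma BBM.rpow_lip {p M a b : ℝ} (hp : 1 ≤ p) (ha : a ∈ Set.Icc 0 M) (hb : b ∈ Set.Icc 0 M) :
    |a ^ p - b ^ p| ≤ p * M ^ (p - 1) * |a - b| := by
  have hM : 0 ≤ M := le_trans ha.1 ha.2
  have key := Convex.norm_image_sub_le_of_norm_hasDerivWithin_le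
    (f := fun t : ℝ => t ^ p) (f' := fun t : ℝ => p * t ^ (p - 1))
    (C := p * M ^ (p - 1)) (s := Set.Icc 0 M)
    (fun t ht => (Real.hasDerivAt_rpow_const (Or.inr hp)).hasDerivWithinAt)
    (fun t ht => by
      rw [Real.norm_eq_abs, abs_of_nonneg (mul_nonneg (by linarith)
        (Real.rpow_nonneg ht.1 _))]
      exact mul_le_mul_of_nonneg_left
        (Real.rpow_le_rpow ht.1 ht.2 (by linarith)) (by linarith))
    (convex_Icc 0 M) hb ha
  simpa [Real.norm_eq_abs] using key


set_option maxHeartbeats 2000000 in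
theorem periSeminorm_BBM_limit_smooth (N : ℕ) (hN : 1 ≤ N) (i : Fin N)
    (p s : ℝ) (hp : 1 < p) (hs : 0 < s) (hs1 : s < 1)
    (u : (Fin N → ℝ) → ℝ) (hu : ContDiff ℝ 2 u) (hcpt : HasCompactSupport u) :
    Tendsto (fun δ : ℝ =>
        ENNReal.ofReal (δ ^ (-(p * (1 - s)))) * periSeminorm N i s p δ u)
      (𝓝[>] 0)
      (𝓝 (ENNReal.ofReal (2 / (p * (1 - s)) *
        ∫ x : Fin N → ℝ, |fderiv ℝ u x (stdBasis N i)| ^ p))) := by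
  classical
  have hp0 : (0:ℝ) < p := by linarith
  set q := p * (1 - s) with hq_def
  have hq : 0 < q := by rw [hq_def]; nlinarith
  set e := stdBasis N i with he_def
  have he1 : ‖e‖ = 1 := by
    rw [he_def]; unfold stdBasis
    rw [Pi.norm_single]; norm_num
  have hud : Differentiable ℝ u := hu.differentiable (by norm_num)
  -- Lipschitz bound on fderiv
  obtain ⟨L, hL⟩ := ContDiff.lipschitzWith_of_hasCompactSupport (hcpt.fderiv ℝ)
    (hu.fderiv_right (m := 1) (by norm_num)) one_ne_zero
  set C : ℝ := (L : ℝ) with hC_def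
  have hC0 : 0 ≤ C := L.coe_nonneg
  -- Taylor estimate
  have key : ∀ (x : Fin N → ℝ) (h : ℝ),
      |u (x + h • e) - u x - h * fderiv ℝ u x e| ≤ C * (|h| * |h|) := by
    intro x h
    have hmem1 : x ∈ Metric.closedBall x |h| := Metric.mem_closedBall_self (abs_nonneg h)
    have hmem2 : x + h • e ∈ Metric.closedBall x |h| := by
      rw [Metric.mem_closedBall, dist_eq_norm, add_sub_cancel_left, norm_smul, he1,
        Real.norm_eq_abs, mul_one]
    have hdiff : ∀ y ∈ Metric.closedBall x |h|,
        DifferentiableAt ℝ (fun z => u z - fderiv ℝ u x z) y :=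
      fun y _ => (hud y).sub (fderiv ℝ u x).differentiableAt
    have hbound : ∀ y ∈ Metric.closedBall x |h|,
        ‖fderiv ℝ (fun z => u z - fderiv ℝ u x z) y‖ ≤ C * |h| := by
      intro y hy
      have h1 : fderiv ℝ (fun z => u z - fderiv ℝ u x z) y
          = fderiv ℝ u y - fderiv ℝ u x := by
        rw [fderiv_fun_sub (hud y) (fderiv ℝ u x).differentiableAt, (fderiv ℝ u x).fderiv]
      rw [h1, ← dist_eq_norm]
      calc dist (fderiv ℝ u y) (fderiv ℝ u x) ≤ C * dist y x := hL.dist_le_mul y x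
        _ ≤ C * |h| := by
            have := Metric.mem_closedBall.mp hy
            rw [dist_comm] at this ⊢
            exact mul_le_mul_of_nonneg_left this hC0
    have hmvt := (convex_closedBall x |h|).norm_image_sub_le_of_norm_fderiv_le hdiff hbound hmem1 hmem2
    have hA : (fderiv ℝ u x) (x + h • e) - (fderiv ℝ u x) x = h * fderiv ℝ u x e := by
      rw [← ContinuousLinearMap.map_sub, add_sub_cancel_left,
        ContinuousLinearMap.map_smul, smul_eq_mul]
    have hxy : ‖x + h • e - x‖ = |h| := by
      rw [add_sub_cancel_left, norm_smul, he1, Real.norm_eq_abs, mul_one]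
    rw [hxy] at hmvt
    calc |u (x + h • e) - u x - h * fderiv ℝ u x e|
        = ‖(u (x + h • e) - fderiv ℝ u x (x + h • e)) - (u x - fderiv ℝ u x x)‖ := by
          rw [Real.norm_eq_abs]
          congr 1
          rw [show (u (x + h • e) - fderiv ℝ u x (x + h • e)) - (u x - fderiv ℝ u x x)
            = u (x + h • e) - u x - ((fderiv ℝ u x) (x + h • e) - (fderiv ℝ u x) x) by ring,
            hA]
      _ ≤ C * |h| * |h| := hmvt
      _ = C * (|h| * |h|) := by ring
  -- sup bound on the derivative
  obtain ⟨M, hM⟩ := (hu.continuous_fderiv (by norm_num)).bounded_above_of_compact_support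
    (hcpt.fderiv ℝ)
  have hDM : ∀ x, |fderiv ℝ u x e| ≤ M := by
    intro x
    calc |fderiv ℝ u x e| = ‖fderiv ℝ u x e‖ := rfl
      _ ≤ ‖fderiv ℝ u x‖ * ‖e‖ := (fderiv ℝ u x).le_opNorm e
      _ = ‖fderiv ℝ u x‖ := by rw [he1, mul_one]
      _ ≤ M := hM x
  have hM0 : 0 ≤ M := le_trans (abs_nonneg _) (hDM 0)
  -- the compact set K
  set K := Metric.cthickening 1 (tsupport u) with hK_def
  have hKc : IsCompact K := hcpt.cthickening
  have hKm : MeasurableSet K := hKc.measurableSet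
  have htsub : tsupport u ⊆ K := Metric.self_subset_cthickening _
  have hDK : ∀ x ∉ K, fderiv ℝ u x e = 0 := by
    intro x hx
    have hxs : x ∉ tsupport u := fun hmem => hx (htsub hmem)
    have : fderiv ℝ u x = 0 := by
      by_contra hne
      exact hxs (support_fderiv_subset ℝ (Function.mem_support.mpr hne))
    rw [this]; rfl
  -- integrability of |∂u|^p
  have hDcont : Continuous fun x => fderiv ℝ u x e := by
    exact (ContinuousLinearMap.apply ℝ ℝ e).continuous.comp (hu.continuous_fderiv (by norm_num))
  have hfabs : Continuous fun x => |fderiv ℝ u x e| ^ p :=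
    hDcont.abs.rpow_const fun x => Or.inr hp0.le
  have hcs : HasCompactSupport fun x => |fderiv ℝ u x e| ^ p := by
    have : HasCompactSupport fun x => fderiv ℝ u x e := hcpt.fderiv_apply ℝ e
    exact this.comp_left (g := fun t : ℝ => |t| ^ p)
      (by simp [Real.zero_rpow hp0.ne'])
  have hDint : Integrable fun x => |fderiv ℝ u x e| ^ p :=
    hfabs.integrable_of_hasCompactSupport hcs
  set A := ∫ x : Fin N → ℝ, |fderiv ℝ u x e| ^ p with hA_def
  have hA0 : 0 ≤ A :=
    integral_nonneg fun x => Real.rpow_nonneg (abs_nonneg _) _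
  have hAeq : ∫⁻ x, ENNReal.ofReal (|fderiv ℝ u x e| ^ p) = ENNReal.ofReal A :=
    (ofReal_integral_eq_lintegral_ofReal hDint
      (ae_of_all _ fun x => Real.rpow_nonneg (abs_nonneg _) _)).symm
  set V := (volume K).toReal with hV_def
  have hVfin : volume K ≠ ⊤ := hKc.measure_lt_top.ne
  have hV0 : 0 ≤ V := ENNReal.toReal_nonneg
  have hvolK : volume K = ENNReal.ofReal V := (ENNReal.ofReal_toReal hVfin).symm
  set B := p * (M + C) ^ (p - 1) * C with hB_def
  have hB0 : 0 ≤ B := by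
    rw [hB_def]
    have : (0:ℝ) ≤ (M + C) ^ (p - 1) := Real.rpow_nonneg (by linarith) _
    positivity
  -- main two-sided bound
  have main : ∀ δ : ℝ, 0 < δ → δ ≤ 1 →
      ENNReal.ofReal (2 / q * (A - B * V * δ)) ≤
        ENNReal.ofReal (δ ^ (-q)) * periSeminorm N i s p δ u ∧
      ENNReal.ofReal (δ ^ (-q)) * periSeminorm N i s p δ u ≤
        ENNReal.ofReal (2 / q * (A + B * V * δ)) := by
    intro δ hδ hδ1
    have hc0 : (0:ℝ) ≤ 2 * δ ^ q / q := by positivity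
    have hqexp : q - 1 = p - (1 + s * p) := by rw [hq_def]; ring
    -- pointwise estimates in h
    have habs : ∀ (x : Fin N → ℝ) (h : ℝ), h ∈ Set.Icc (-δ) δ →
        |u (x + h • e) - u x| ≤ |h| * (|fderiv ℝ u x e| + C * δ) := by
      intro x h hh
      have h1 : |h| ≤ δ := abs_le.mpr ⟨hh.1, hh.2⟩
      have tri : |u (x + h • e) - u x| ≤
          |u (x + h • e) - u x - h * fderiv ℝ u x e| + |h * fderiv ℝ u x e| := by
        calc |u (x + h • e) - u x|
            = |(u (x + h • e) - u x - h * fderiv ℝ u x e) + h * fderiv ℝ u x e| := by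
              ring_nf
          _ ≤ _ := abs_add_le _ _
      calc |u (x + h • e) - u x| ≤ C * (|h| * |h|) + |h| * |fderiv ℝ u x e| := by
            refine tri.trans (add_le_add (key x h) ?_)
            rw [abs_mul]
        _ ≤ C * (|h| * δ) + |h| * |fderiv ℝ u x e| := by
            have : C * (|h| * |h|) ≤ C * (|h| * δ) := by
              apply mul_le_mul_of_nonneg_left _ hC0
              exact mul_le_mul_of_nonneg_left h1 (abs_nonneg _)
            linarith
        _ = |h| * (|fderiv ℝ u x e| + C * δ) := by ring
    have hlow : ∀ (x : Fin N → ℝ) (h : ℝ), h ∈ Set.Icc (-δ) δ →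
        |h| * (|fderiv ℝ u x e| - C * δ) ≤ |u (x + h • e) - u x| := by
      intro x h hh
      have h1 : |h| ≤ δ := abs_le.mpr ⟨hh.1, hh.2⟩
      have tri : |h * fderiv ℝ u x e| ≤
          |u (x + h • e) - u x| + |u (x + h • e) - u x - h * fderiv ℝ u x e| := by
        calc |h * fderiv ℝ u x e|
            = |(u (x + h • e) - u x) - (u (x + h • e) - u x - h * fderiv ℝ u x e)| := by
              ring_nf
          _ ≤ _ := abs_sub _ _
      have h2 : C * (|h| * |h|) ≤ C * (|h| * δ) := by
        apply mul_le_mul_of_nonneg_left _ hC0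
        exact mul_le_mul_of_nonneg_left h1 (abs_nonneg _)
      have h3 := key x h
      rw [abs_mul] at tri
      nlinarith [abs_nonneg h]
    set m : (Fin N → ℝ) → ℝ := fun x => max (|fderiv ℝ u x e| - C * δ) 0 with hm_def
    have hm0 : ∀ x, 0 ≤ m x := fun x => le_max_right _ _
    have hmlow : ∀ (x : Fin N → ℝ) (h : ℝ), h ∈ Set.Icc (-δ) δ →
        |h| * m x ≤ |u (x + h • e) - u x| := by
      intro x h hh
      rcases le_or_gt (|fderiv ℝ u x e| - C * δ) 0 with h'|h'
      · rw [hm_def]; simp only [max_eq_right h']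
        simp [abs_nonneg]
      · rw [hm_def]; simp only [max_eq_left h'.le]
        exact hlow x h hh
    have hne0 : ∀ᵐ h ∂(volume.restrict (Set.Icc (-δ) δ)), h ≠ (0:ℝ) := by
      refine ae_restrict_of_ae ?_
      rw [ae_iff]
      have : {a : ℝ | ¬a ≠ 0} = {0} := by ext a; simp
      rw [this]
      exact measure_singleton 0
    -- upper bound for the inner integral
    have hupper_h : ∀ x : Fin N → ℝ,
        (∫⁻ h in Set.Icc (-δ) δ,
          ENNReal.ofReal (|u (x + h • e) - u x| ^ p / |h| ^ (1 + s * p)))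
        ≤ ENNReal.ofReal ((|fderiv ℝ u x e| + C * δ) ^ p * (2 * δ ^ q / q)) := by
      intro x
      have step : (∫⁻ h in Set.Icc (-δ) δ,
          ENNReal.ofReal (|u (x + h • e) - u x| ^ p / |h| ^ (1 + s * p)))
          ≤ ∫⁻ h in Set.Icc (-δ) δ,
            ENNReal.ofReal ((|fderiv ℝ u x e| + C * δ) ^ p * |h| ^ (q - 1)) := by
        refine lintegral_mono_ae ?_
        filter_upwards [hne0, ae_restrict_mem measurableSet_Icc] with h h0 hh
        apply ENNReal.ofReal_le_ofReal
        have hpos : (0:ℝ) < |h| := abs_pos.mpr h0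
        have hnum : |u (x + h • e) - u x| ^ p
            ≤ (|h| * (|fderiv ℝ u x e| + C * δ)) ^ p :=
          Real.rpow_le_rpow (abs_nonneg _) (habs x h hh) hp0.le
        calc |u (x + h • e) - u x| ^ p / |h| ^ (1 + s * p)
            ≤ (|h| * (|fderiv ℝ u x e| + C * δ)) ^ p / |h| ^ (1 + s * p) := by
              gcongr
          _ = (|fderiv ℝ u x e| + C * δ) ^ p * |h| ^ (q - 1) := by
              rw [Real.mul_rpow (abs_nonneg _) (by positivity), hqexp,
                Real.rpow_sub hpos]
              ring
      refine step.trans_eq ?_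
      rw [BBM.inner_lint hq hδ (by positivity)]
    -- lower bound for the inner integral
    have hlower_h : ∀ x : Fin N → ℝ,
        ENNReal.ofReal (m x ^ p * (2 * δ ^ q / q)) ≤
        ∫⁻ h in Set.Icc (-δ) δ,
          ENNReal.ofReal (|u (x + h • e) - u x| ^ p / |h| ^ (1 + s * p)) := by
      intro x
      rw [← BBM.inner_lint hq hδ (Real.rpow_nonneg (hm0 x) p)]
      refine lintegral_mono_ae ?_
      filter_upwards [hne0, ae_restrict_mem measurableSet_Icc] with h h0 hh
      apply ENNReal.ofReal_le_ofReal
      have hpos : (0:ℝ) < |h| := abs_pos.mpr h0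
      have hnum : (|h| * m x) ^ p ≤ |u (x + h • e) - u x| ^ p :=
        Real.rpow_le_rpow (mul_nonneg (abs_nonneg _) (hm0 x)) (hmlow x h hh) hp0.le
      calc m x ^ p * |h| ^ (q - 1)
          = (|h| * m x) ^ p / |h| ^ (1 + s * p) := by
            rw [Real.mul_rpow (abs_nonneg _) (hm0 x), hqexp, Real.rpow_sub hpos]
            ring
        _ ≤ |u (x + h • e) - u x| ^ p / |h| ^ (1 + s * p) := by gcongr
    -- vanishing outside K
    have hvanish : ∀ x ∉ K,
        (∫⁻ h in Set.Icc (-δ) δ,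
          ENNReal.ofReal (|u (x + h • e) - u x| ^ p / |h| ^ (1 + s * p))) = 0 := by
      intro x hx
      have hzero : ∀ h ∈ Set.Icc (-δ) δ,
          ENNReal.ofReal (|u (x + h • e) - u x| ^ p / |h| ^ (1 + s * p)) = 0 := by
        intro h hh
        have hh1 : |h| ≤ 1 := le_trans (abs_le.mpr ⟨hh.1, hh.2⟩) hδ1
        have hux : u x = 0 := image_eq_zero_of_notMem_tsupport (fun hmem => hx (htsub hmem))
        have hux2 : u (x + h • e) = 0 := by
          by_contra hne
          have hmem : x + h • e ∈ tsupport u :=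
            subset_closure (Function.mem_support.mpr hne)
          refine hx (Metric.mem_cthickening_of_dist_le x (x + h • e) 1 _ hmem ?_)
          rw [dist_eq_norm]
          rw [show x - (x + h • e) = -(h • e) by abel, norm_neg, norm_smul, he1,
            Real.norm_eq_abs, mul_one]
          exact hh1
        rw [hux, hux2]
        simp [Real.zero_rpow hp0.ne']
      rw [setLIntegral_congr_fun_ae measurableSet_Icc (ae_of_all _ hzero)]
      simp
    have hCd : (0:ℝ) ≤ C * δ := mul_nonneg hC0 hδ.le
    have hCdC : C * δ ≤ C := by
      have := mul_le_mul_of_nonneg_left hδ1 hC0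
      linarith
    have hδq' : (0:ℝ) ≤ δ ^ q := Real.rpow_nonneg hδ.le q
    have hMC : (0:ℝ) ≤ M + C := by linarith
    have hPnn : (0:ℝ) ≤ p * (M + C) ^ (p - 1) :=
      mul_nonneg hp0.le (Real.rpow_nonneg hMC _)
    -- upper bound assembly
    have hUp : periSeminorm N i s p δ u ≤
        ENNReal.ofReal (2 * δ ^ q / q) *
          (ENNReal.ofReal A + ENNReal.ofReal (B * δ) * volume K) := by
      have step1 : periSeminorm N i s p δ u ≤
          ∫⁻ x, K.indicator (fun x => ENNReal.ofReal (2 * δ ^ q / q) *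
            ENNReal.ofReal ((|fderiv ℝ u x e| + C * δ) ^ p)) x := by
        unfold periSeminorm
        rw [← he_def]
        apply lintegral_mono
        intro x
        beta_reduce
        by_cases hx : x ∈ K
        · rw [Set.indicator_of_mem hx]
          refine (hupper_h x).trans (le_of_eq ?_)
          rw [mul_comm ((|fderiv ℝ u x e| + C * δ) ^ p), ENNReal.ofReal_mul hc0]
        · rw [Set.indicator_of_notMem hx, hvanish x hx]
      refine step1.trans ?_
      rw [lintegral_indicator hKm, lintegral_const_mul' _ _ ENNReal.ofReal_ne_top]
      refine mul_le_mul_right ?_ _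
      calc ∫⁻ x in K, ENNReal.ofReal ((|fderiv ℝ u x e| + C * δ) ^ p)
          ≤ ∫⁻ x in K, (ENNReal.ofReal (|fderiv ℝ u x e| ^ p) + ENNReal.ofReal (B * δ)) := by
            apply lintegral_mono
            intro x
            have ha : |fderiv ℝ u x e| + C * δ ∈ Set.Icc (0:ℝ) (M + C) :=
              ⟨add_nonneg (abs_nonneg _) hCd, by linarith [hDM x, hCdC]⟩
            have hb : |fderiv ℝ u x e| ∈ Set.Icc (0:ℝ) (M + C) :=
              ⟨abs_nonneg _, by linarith [hDM x, hC0]⟩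
            have hlip := BBM.rpow_lip hp.le ha hb
            have hab : abs ((|fderiv ℝ u x e| + C * δ) - |fderiv ℝ u x e|) = C * δ := by
              rw [add_sub_cancel_left]
              exact abs_of_nonneg hCd
            have h1 : (|fderiv ℝ u x e| + C * δ) ^ p ≤ |fderiv ℝ u x e| ^ p + B * δ := by
              rw [hab] at hlip
              have h2 := (abs_le.mp hlip).2
              have h4 : p * (M + C) ^ (p - 1) * (C * δ) = B * δ := by rw [hB_def]; ring
              linarith
            calc ENNReal.ofReal ((|fderiv ℝ u x e| + C * δ) ^ p)
                ≤ ENNReal.ofReal (|fderiv ℝ u x e| ^ p + B * δ) :=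
                  ENNReal.ofReal_le_ofReal h1
              _ ≤ _ := ENNReal.ofReal_add_le
        _ = (∫⁻ x in K, ENNReal.ofReal (|fderiv ℝ u x e| ^ p)) +
              ENNReal.ofReal (B * δ) * volume K := by
            rw [lintegral_add_right _ measurable_const, setLIntegral_const]
        _ ≤ ENNReal.ofReal A + ENNReal.ofReal (B * δ) * volume K := by
            gcongr
            rw [← hAeq]
            exact setLIntegral_le_lintegral _ _
    -- lower bound assembly
    have hLowAll : ENNReal.ofReal (2 * δ ^ q / q) *
        (ENNReal.ofReal A - ENNReal.ofReal (B * δ) * volume K) ≤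
          periSeminorm N i s p δ u := by
      have step1 : (∫⁻ x, ENNReal.ofReal (m x ^ p * (2 * δ ^ q / q)))
          ≤ periSeminorm N i s p δ u := by
        unfold periSeminorm
        rw [← he_def]
        exact lintegral_mono fun x => hlower_h x
      have step2 : ENNReal.ofReal A ≤ (∫⁻ x, ENNReal.ofReal (m x ^ p)) +
          ENNReal.ofReal (B * δ) * volume K := by
        rw [← hAeq]
        calc ∫⁻ x, ENNReal.ofReal (|fderiv ℝ u x e| ^ p)
            ≤ ∫⁻ x, (ENNReal.ofReal (m x ^ p) +
                K.indicator (fun _ => ENNReal.ofReal (B * δ)) x) := by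
              apply lintegral_mono
              intro x
              beta_reduce
              by_cases hx : x ∈ K
              · rw [Set.indicator_of_mem hx]
                have ha : |fderiv ℝ u x e| ∈ Set.Icc (0:ℝ) (M + C) :=
                  ⟨abs_nonneg _, by linarith [hDM x, hC0]⟩
                have hb : m x ∈ Set.Icc (0:ℝ) (M + C) := by
                  refine ⟨hm0 x, ?_⟩
                  rw [hm_def]
                  exact max_le (by linarith [hDM x, hCd, hC0]) hMC
                have hlip := BBM.rpow_lip hp.le ha hb
                have hab : abs (|fderiv ℝ u x e| - m x) ≤ C * δ := by
                  rcases le_or_gt (|fderiv ℝ u x e| - C * δ) 0 with h'|h'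
                  · rw [hm_def]
                    simp only [max_eq_right h', sub_zero]
                    rw [abs_of_nonneg (abs_nonneg _)]
                    linarith
                  · rw [hm_def]
                    simp only [max_eq_left h'.le]
                    rw [show |fderiv ℝ u x e| - (|fderiv ℝ u x e| - C * δ) = C * δ from by ring]
                    rw [abs_of_nonneg hCd]
                have h1 : |fderiv ℝ u x e| ^ p ≤ m x ^ p + B * δ := by
                  have h2 := (abs_le.mp hlip).2
                  have h3 : p * (M + C) ^ (p - 1) * abs (|fderiv ℝ u x e| - m x) ≤
                      p * (M + C) ^ (p - 1) * (C * δ) :=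
                    mul_le_mul_of_nonneg_left hab hPnn
                  have h4 : p * (M + C) ^ (p - 1) * (C * δ) = B * δ := by rw [hB_def]; ring
                  linarith
                calc ENNReal.ofReal (|fderiv ℝ u x e| ^ p)
                    ≤ ENNReal.ofReal (m x ^ p + B * δ) := ENNReal.ofReal_le_ofReal h1
                  _ ≤ _ := ENNReal.ofReal_add_le
              · rw [Set.indicator_of_notMem hx, hDK x hx]
                simp [Real.zero_rpow hp0.ne']
          _ = _ := by
              rw [lintegral_add_right _ (measurable_const.indicator hKm),
                lintegral_indicator_const hKm]
      have step3 : ENNReal.ofReal A - ENNReal.ofReal (B * δ) * volume K ≤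
          ∫⁻ x, ENNReal.ofReal (m x ^ p) := tsub_le_iff_right.mpr step2
      calc ENNReal.ofReal (2 * δ ^ q / q) *
            (ENNReal.ofReal A - ENNReal.ofReal (B * δ) * volume K)
          ≤ ENNReal.ofReal (2 * δ ^ q / q) * ∫⁻ x, ENNReal.ofReal (m x ^ p) :=
            mul_le_mul_right step3 _
        _ = ∫⁻ x, ENNReal.ofReal (m x ^ p * (2 * δ ^ q / q)) := by
            rw [← lintegral_const_mul' _ _ ENNReal.ofReal_ne_top]
            congr 1
            funext x
            rw [mul_comm (m x ^ p), ENNReal.ofReal_mul hc0]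
        _ ≤ _ := step1
    -- scaling identities
    have hsc : ENNReal.ofReal (δ ^ (-q)) * ENNReal.ofReal (2 * δ ^ q / q)
        = ENNReal.ofReal (2 / q) := by
      rw [← ENNReal.ofReal_mul (Real.rpow_nonneg hδ.le _)]
      congr 1
      have hδq : (0:ℝ) < δ ^ q := Real.rpow_pos_of_pos hδ q
      rw [Real.rpow_neg hδ.le]
      field_simp
    have htau : ENNReal.ofReal (B * δ) * volume K = ENNReal.ofReal (B * V * δ) := by
      rw [hvolK, ← ENNReal.ofReal_mul (mul_nonneg hB0 hδ.le)]
      congr 1; ring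
    have h2q : (0:ℝ) ≤ 2 / q := div_nonneg (by norm_num) hq.le
    constructor
    · calc ENNReal.ofReal (2 / q * (A - B * V * δ))
          = ENNReal.ofReal (2 / q) * ENNReal.ofReal (A - B * V * δ) :=
            ENNReal.ofReal_mul h2q
        _ = ENNReal.ofReal (2 / q) *
            (ENNReal.ofReal A - ENNReal.ofReal (B * V * δ)) := by
            rw [ENNReal.ofReal_sub _ (mul_nonneg (mul_nonneg hB0 hV0) hδ.le)]
        _ = ENNReal.ofReal (δ ^ (-q)) * (ENNReal.ofReal (2 * δ ^ q / q) *
            (ENNReal.ofReal A - ENNReal.ofReal (B * δ) * volume K)) := by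
            rw [← mul_assoc, hsc, htau]
        _ ≤ ENNReal.ofReal (δ ^ (-q)) * periSeminorm N i s p δ u :=
            mul_le_mul_right hLowAll _
    · calc ENNReal.ofReal (δ ^ (-q)) * periSeminorm N i s p δ u
          ≤ ENNReal.ofReal (δ ^ (-q)) * (ENNReal.ofReal (2 * δ ^ q / q) *
            (ENNReal.ofReal A + ENNReal.ofReal (B * δ) * volume K)) :=
            mul_le_mul_right hUp _
        _ = ENNReal.ofReal (2 / q) *
            (ENNReal.ofReal A + ENNReal.ofReal (B * V * δ)) := by
            rw [← mul_assoc, hsc, htau]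
        _ = ENNReal.ofReal (2 / q * (A + B * V * δ)) := by
            rw [← ENNReal.ofReal_add hA0 (mul_nonneg (mul_nonneg hB0 hV0) hδ.le),
              ← ENNReal.ofReal_mul h2q]
  -- squeeze
  have hmem : Set.Ioc (0:ℝ) 1 ∈ 𝓝[>] (0:ℝ) :=
    Ioc_mem_nhdsGT_of_mem ⟨le_refl 0, zero_lt_one⟩
  refine tendsto_of_tendsto_of_tendsto_of_le_of_le'
    (g := fun δ : ℝ => ENNReal.ofReal (2 / q * (A - B * V * δ)))
    (h := fun δ : ℝ => ENNReal.ofReal (2 / q * (A + B * V * δ))) ?_ ?_ ?_ ?_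
  · have hr : Tendsto (fun δ : ℝ => 2 / q * (A - B * V * δ)) (𝓝[>] 0) (𝓝 (2 / q * A)) := by
      have hcont : Continuous fun δ : ℝ => 2 / q * (A - B * V * δ) :=
        continuous_const.mul (continuous_const.sub (continuous_const.mul continuous_id))
      have h2 := (hcont.tendsto 0).mono_left (nhdsWithin_le_nhds (s := Set.Ioi (0:ℝ)))
      simpa using h2
    exact (ENNReal.continuous_ofReal.tendsto _).comp hr
  · have hr : Tendsto (fun δ : ℝ => 2 / q * (A + B * V * δ)) (𝓝[>] 0) (𝓝 (2 / q * A)) := by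
      have hcont : Continuous fun δ : ℝ => 2 / q * (A + B * V * δ) :=
        continuous_const.mul (continuous_const.add (continuous_const.mul continuous_id))
      have h2 := (hcont.tendsto 0).mono_left (nhdsWithin_le_nhds (s := Set.Ioi (0:ℝ)))
      simpa using h2
    exact (ENNReal.continuous_ofReal.tendsto _).comp hr
  · filter_upwards [hmem] with δ hδ
    exact (main δ hδ.1 hδ.2).1
  · filter_upwards [hmem] with δ hδ
    exact (main δ hδ.1 hδ.2).2


end
end

section
/- Let u ∈ C^2_c(ℝ^N) with p as above. Then ∫_{ℝ^N} (2/p̄(x)) |∂_1 u(x)|^{p̄(x)} dx ≤ liminf_{s↑1} (1−s) ∫_{ℝ^N}∫_ℝ |u(x+h e_1) − u(x)|^{p(x, x+h e_1)} |h|^{−1−s p(x, x+h e_1)} dh dx. -/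
set_option maxHeartbeats 1000000


open MeasureTheory Real Filter Topology
open scoped ENNReal

noncomputable section

/-- The directional variable-exponent Gagliardo modular
`J_{s,p}(u) = ∫_{ℝ^N} ∫_ℝ |u(x+h e_i) − u(x)|^{p(x,x+h e_i)} / |h|^{1+s p(x,x+h e_i)} dh dx`. -/
def dirModular (N : ℕ) (i : Fin N) (s : ℝ) (p : (Fin N → ℝ) → (Fin N → ℝ) → ℝ)
    (u : (Fin N → ℝ) → ℝ) : ℝ≥0∞ :=
  ∫⁻ x : Fin N → ℝ, ∫⁻ h : ℝ,
    ENNReal.ofReal (|u (x + h • stdBasis N i) - u x| ^ p x (x + h • stdBasis N i) /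
      |h| ^ (1 + s * p x (x + h • stdBasis N i)))


lemma lint_Ioo_pos {m δ E : ℝ} (hm : 0 ≤ m) (hδ : 0 < δ) (hE : 0 < E) :
    ∫⁻ h in Set.Ioo (0:ℝ) δ, ENNReal.ofReal (m * h ^ (E - 1)) =
      ENNReal.ofReal (m * (δ ^ E / E)) := by
  rw [← MeasureTheory.ofReal_integral_eq_lintegral_ofReal]
  · congr 1
    rw [MeasureTheory.integral_const_mul]
    congr 1
    rw [← MeasureTheory.integral_Ioc_eq_integral_Ioo, ← intervalIntegral.integral_of_le hδ.le,
      integral_rpow (Or.inl (by linarith))]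
    rw [Real.zero_rpow (by linarith : E - 1 + 1 ≠ 0)]
    rw [show E - 1 + 1 = E by ring]
    ring
  · have h1 : IntervalIntegrable (fun x : ℝ => m * x ^ (E - 1)) volume 0 δ :=
      (intervalIntegral.intervalIntegrable_rpow' (by linarith)).const_mul m
    exact (intervalIntegrable_iff_integrableOn_Ioo_of_le hδ.le).mp h1
  · exact (ae_restrict_mem measurableSet_Ioo).mono fun h hh =>
      mul_nonneg hm (Real.rpow_nonneg hh.1.le _)

lemma lint_Ioo_neg {m δ E : ℝ} (hm : 0 ≤ m) (hδ : 0 < δ) (hE : 0 < E) :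
    ∫⁻ h in Set.Ioo (-δ) (0:ℝ), ENNReal.ofReal (m * (-h) ^ (E - 1)) =
      ENNReal.ofReal (m * (δ ^ E / E)) := by
  rw [← MeasureTheory.ofReal_integral_eq_lintegral_ofReal]
  · congr 1
    rw [← MeasureTheory.integral_Ioc_eq_integral_Ioo,
        ← intervalIntegral.integral_of_le (by linarith : -δ ≤ 0)]
    have := intervalIntegral.integral_comp_neg (a := -δ) (b := 0)
      (f := fun y : ℝ => m * y ^ (E - 1))
    simp only [neg_zero, neg_neg] at this
    rw [this, intervalIntegral.integral_const_mul, integral_rpow (Or.inl (by linarith))]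
    rw [Real.zero_rpow (by linarith : E - 1 + 1 ≠ 0), show E - 1 + 1 = E by ring]
    ring
  · have h1 : IntervalIntegrable (fun x : ℝ => m * x ^ (E - 1)) volume δ 0 :=
      ((intervalIntegral.intervalIntegrable_rpow' (by linarith)).const_mul m).symm
    have h2 := (IntervalIntegrable.iff_comp_neg (by exact enorm_ne_top)).mp h1
    simp only [neg_zero] at h2
    exact (intervalIntegrable_iff_integrableOn_Ioo_of_le (by linarith : -δ ≤ 0)).mp h2
  · exact (ae_restrict_mem measurableSet_Ioo).mono fun h hh =>
      mul_nonneg hm (Real.rpow_nonneg (by linarith [hh.2] : (0:ℝ) ≤ -h) _)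


theorem varExp_BBM_liminf (N : ℕ) (hN : 0 < N)
    (p : (Fin N → ℝ) → (Fin N → ℝ) → ℝ)
    (hpcont : Continuous fun q : (Fin N → ℝ) × (Fin N → ℝ) => p q.1 q.2)
    (hpsymm : ∀ x y, p x y = p y x)
    (pm pM : ℝ) (hpm : 1 < pm)
    (hpbounds : ∀ x y, pm ≤ p x y ∧ p x y ≤ pM)
    (u : (Fin N → ℝ) → ℝ) (hu : ContDiff ℝ 2 u) (hcpt : HasCompactSupport u) :
    ENNReal.ofReal (∫ x : Fin N → ℝ,
        2 / p x x * |fderiv ℝ u x (stdBasis N ⟨0, hN⟩)| ^ p x x) ≤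
      Filter.liminf (fun s : ℝ =>
        ENNReal.ofReal (1 - s) * dirModular N ⟨0, hN⟩ s p u) (𝓝[<] 1) := by
  simp only [dirModular]
  set e : Fin N → ℝ := stdBasis N ⟨0, hN⟩ with he
  set a : (Fin N → ℝ) → ℝ := fun x => |fderiv ℝ u x e| with ha_def
  set q : (Fin N → ℝ) → ℝ := fun x => p x x with hq_def
  -- basic facts about q
  have hqpm : ∀ x, pm ≤ q x := fun x => (hpbounds x x).1
  have hqpM : ∀ x, q x ≤ pM := fun x => (hpbounds x x).2
  have hq0 : ∀ x, 0 < q x := fun x => by have := hqpm x; linarith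
  have hqcont : Continuous q := hpcont.comp (continuous_id.prodMk continuous_id)
  -- derivative continuity
  have hu1 : ContDiff ℝ 1 (fderiv ℝ u) := hu.fderiv_right (by norm_num)
  have hdu_cont : Continuous (fderiv ℝ u) := hu1.continuous
  have hacont : Continuous a := (hdu_cont.clm_apply continuous_const).abs
  -- norm of e
  have he1 : ‖e‖ = 1 := by
    rw [he]; unfold stdBasis; rw [Pi.norm_single]; simp
  -- bound on second derivative
  have hcs2 : HasCompactSupport (fderiv ℝ (fderiv ℝ u)) := (hcpt.fderiv ℝ).fderiv ℝ
  have hct2 : Continuous (fderiv ℝ (fderiv ℝ u)) := hu1.continuous_fderiv one_ne_zero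
  have hb := HasCompactSupport.exists_bound_of_continuous (f := fderiv ℝ (fderiv ℝ u)) hcs2 hct2
  obtain ⟨C, hC⟩ := hb
  set M : ℝ := max C 0 with hM_def
  have hM0 : 0 ≤ M := le_max_right _ _
  have hMb : ∀ y, ‖fderiv ℝ (fderiv ℝ u) y‖ ≤ M := fun y => le_trans (hC y) (le_max_left _ _)
  have hlip : ∀ y z, ‖fderiv ℝ u y - fderiv ℝ u z‖ ≤ M * ‖y - z‖ := by
    intro y z
    exact Convex.norm_image_sub_le_of_norm_fderiv_le
      (fun w _ => (hu1.differentiable one_ne_zero).differentiableAt)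
      (fun w _ => hMb w) convex_univ (Set.mem_univ z) (Set.mem_univ y)
  -- Taylor estimate
  have htay : ∀ (x : Fin N → ℝ) (δ' : ℝ), 0 ≤ δ' → ∀ h : ℝ, |h| ≤ δ' →
      (a x - M * δ') * |h| ≤ |u (x + h • e) - u x| := by
    intro x δ' hδ' h hh
    set D : ℝ := fderiv ℝ u x e with hD
    have hudiff : Differentiable ℝ u := hu.differentiable (by norm_num)
    have hφ : ∀ t : ℝ, HasDerivAt (fun t : ℝ => u (x + t • e) - t * D)
        (fderiv ℝ u (x + t • e) e - D) t := by
      intro t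
      have h1 : HasDerivAt (fun t : ℝ => x + t • e) e t := by
        simpa using ((hasDerivAt_id t).smul_const e).const_add x
      have h2 : HasDerivAt (fun t : ℝ => u (x + t • e)) (fderiv ℝ u (x + t • e) e) t :=
        (hudiff.differentiableAt.hasFDerivAt).comp_hasDerivAt t h1
      simpa only [id_eq, one_mul] using h2.fun_sub ((hasDerivAt_id t).mul_const D)
    have key : ‖(u (x + h • e) - h * D) - (u (x + (0:ℝ) • e) - 0 * D)‖ ≤ (M * δ') * ‖h - 0‖ := by
      apply Convex.norm_image_sub_le_of_norm_hasDerivWithin_le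
        (fun t _ => (hφ t).hasDerivWithinAt) ?_ (convex_uIcc 0 h)
        (Set.left_mem_uIcc) (Set.right_mem_uIcc)
      intro t ht
      have htt : |t| ≤ |h| := by
        rcases le_total (0:ℝ) h with h0 | h0
        · rw [Set.uIcc_of_le h0] at ht
          rw [abs_of_nonneg ht.1, abs_of_nonneg h0]; exact ht.2
        · rw [Set.uIcc_of_ge h0] at ht
          rw [abs_of_nonpos ht.2, abs_of_nonpos h0]; linarith [ht.1]
      have e1 : fderiv ℝ u (x + t • e) e - D = (fderiv ℝ u (x + t • e) - fderiv ℝ u x) e := by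
        simp [hD]
      rw [Real.norm_eq_abs, ← Real.norm_eq_abs, e1]
      calc ‖(fderiv ℝ u (x + t • e) - fderiv ℝ u x) e‖
          ≤ ‖fderiv ℝ u (x + t • e) - fderiv ℝ u x‖ * ‖e‖ :=
            ContinuousLinearMap.le_opNorm _ _
        _ ≤ (M * ‖(x + t • e) - x‖) * 1 := by
            rw [he1]
            exact mul_le_mul (hlip _ _) le_rfl (by norm_num) (by positivity)
        _ = M * |t| := by
            rw [mul_one]
            congr 1
            rw [show (x + t • e) - x = t • e by abel, norm_smul, he1]
            simp
        _ ≤ M * δ' := mul_le_mul_of_nonneg_left (le_trans htt hh) hM0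
    simp only [zero_smul, add_zero, zero_mul, sub_zero, Real.norm_eq_abs] at key
    have hk2 : |(u (x + h • e) - u x) - h * D| ≤ M * δ' * |h| := by
      have heq : u (x + h • e) - h * D - u x = (u (x + h • e) - u x) - h * D := by ring
      rwa [heq] at key
    have h3 : |h * D| ≤ |u (x + h • e) - u x| + M * δ' * |h| := by
      have heq : h * D = (u (x + h • e) - u x) - ((u (x + h • e) - u x) - h * D) := by ring
      calc |h * D| = |(u (x + h • e) - u x) - ((u (x + h • e) - u x) - h * D)| := by rw [← heq]
        _ ≤ |u (x + h • e) - u x| + |(u (x + h • e) - u x) - h * D| := abs_sub _ _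
        _ ≤ |u (x + h • e) - u x| + M * δ' * |h| := by linarith
    have h2 : |h * D| = a x * |h| := by rw [abs_mul, ha_def, mul_comm]
    nlinarith [abs_nonneg h]
  -- uniform continuity of p near the diagonal over the support
  have huc : ∀ η : ℝ, 0 < η → ∃ δ : ℝ, 0 < δ ∧ δ ≤ 1 ∧
      ∀ x ∈ tsupport u, ∀ h : ℝ, |h| ≤ δ → |p x (x + h • e) - q x| ≤ η := by
    intro ηv hηv
    have hF : Continuous (fun z : (Fin N → ℝ) × ℝ => p z.1 (z.1 + z.2 • e)) :=
      hpcont.comp (continuous_fst.prodMk (continuous_fst.add (continuous_snd.smul continuous_const)))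
    have hS : IsCompact ((tsupport u) ×ˢ Set.Icc (-1:ℝ) 1) := hcpt.prod isCompact_Icc
    have hucS := hS.uniformContinuousOn_of_continuous hF.continuousOn
    rw [Metric.uniformContinuousOn_iff] at hucS
    obtain ⟨δ0, hδ0, hδ0'⟩ := hucS ηv hηv
    refine ⟨min (δ0 / 2) 1, by positivity, min_le_right _ _, ?_⟩
    intro x hx h hh
    have hh2 : |h| ≤ δ0 / 2 := le_trans hh (min_le_left _ _)
    have hh1 : |h| ≤ 1 := le_trans hh (min_le_right _ _)
    have hmem1 : (x, h) ∈ (tsupport u) ×ˢ Set.Icc (-1:ℝ) 1 :=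
      ⟨hx, (abs_le.mp hh1).1, (abs_le.mp hh1).2⟩
    have hmem2 : (x, (0:ℝ)) ∈ (tsupport u) ×ˢ Set.Icc (-1:ℝ) 1 :=
      ⟨hx, by norm_num, by norm_num⟩
    have hd : dist (x, h) (x, (0:ℝ)) < δ0 := by
      rw [Prod.dist_eq]
      simp only [dist_self, Real.dist_eq, sub_zero]
      rw [max_eq_right (abs_nonneg h)]
      linarith
    have := hδ0' _ hmem1 _ hmem2 hd
    simp only [Real.dist_eq, zero_smul, add_zero] at this
    rw [hq_def]
    exact (le_of_lt this)
  -- vanishing of derivative outside the support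
  have hfd0 : ∀ x, x ∉ tsupport u → fderiv ℝ u x = 0 := by
    intro x hx
    have h0 : u =ᶠ[𝓝 x] 0 := notMem_tsupport_iff_eventuallyEq.mp hx
    rw [h0.fderiv_eq]
    exact fderiv_const_apply 0
  -- the approximating sequences
  set η : ℕ → ℝ := fun n => min ((pm - 1) / 2) (1 / (n + 1)) with hη_def
  have hηpos : ∀ n, 0 < η n := fun n => lt_min (by linarith) (by positivity)
  have hηle : ∀ n, η n ≤ (pm - 1) / 2 := fun n => min_le_left _ _
  have hηsmall : ∀ n, η n ≤ 1 / (n + 1) := fun n => min_le_right _ _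
  have hqη : ∀ n x, 0 < q x + η n := fun n x => by
    have := hqpm x; have := hηpos n; linarith
  have hqη' : ∀ n x, 0 < q x - η n := by
    intro n x; have := hqpm x; have := hηle n; linarith
  have hseq : ∀ n : ℕ, ∃ δ : ℝ, (0 < δ ∧ δ ≤ 1) ∧ δ ≤ 1 / (n + 1) ∧
      ∀ x ∈ tsupport u, ∀ h : ℝ, |h| ≤ δ → |p x (x + h • e) - q x| ≤ η n := by
    intro n
    obtain ⟨δ, h1, h2, h3⟩ := huc (η n) (hηpos n)
    exact ⟨min δ (1 / (n + 1)), ⟨lt_min h1 (by positivity),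
      le_trans (min_le_left _ _) h2⟩, min_le_right _ _,
      fun x hx h hh => h3 x hx h (le_trans hh (min_le_left _ _))⟩
  choose δ hδaux hδsmall hδp using hseq
  have hδpos : ∀ n, 0 < δ n := fun n => (hδaux n).1
  have hδ1 : ∀ n, δ n ≤ 1 := fun n => (hδaux n).2
  set c : ℕ → (Fin N → ℝ) → ℝ := fun n x => max (a x - M * δ n) 0 with hc_def
  have hcnn : ∀ n x, 0 ≤ c n x := fun n x => le_max_right _ _
  set mf : ℕ → (Fin N → ℝ) → ℝ :=
    fun n x => min ((c n x) ^ (q x + η n)) ((c n x) ^ (q x - η n)) with hmf_def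
  have hmfnn : ∀ n x, 0 ≤ mf n x :=
    fun n x => le_min (Real.rpow_nonneg (hcnn n x) _) (Real.rpow_nonneg (hcnn n x) _)
  set g : ℕ → (Fin N → ℝ) → ℝ≥0∞ :=
    fun n x => ENNReal.ofReal (2 * mf n x / (q x + η n)) with hg_def
  set G : ℕ → ℝ≥0∞ := fun n => ∫⁻ x, g n x with hG_def
  set L : ℝ≥0∞ := Filter.liminf (fun s : ℝ =>
      ENNReal.ofReal (1 - s) * ∫⁻ x : Fin N → ℝ, ∫⁻ h : ℝ,
        ENNReal.ofReal (|u (x + h • e) - u x| ^ p x (x + h • e) /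
          |h| ^ (1 + s * p x (x + h • e)))) (𝓝[<] (1:ℝ)) with hL_def
  show ENNReal.ofReal (∫ x : Fin N → ℝ, 2 / q x * (a x) ^ (q x)) ≤ L
  -- Claim 1 : G n ≤ L
  have hGle : ∀ n, G n ≤ L := by
    intro n
    have hkey : ∀ s : ℝ, s < 1 →
        ENNReal.ofReal (δ n ^ ((1 - s) * (pM + η n))) * G n ≤
          ENNReal.ofReal (1 - s) * ∫⁻ x : Fin N → ℝ, ∫⁻ h : ℝ,
            ENNReal.ofReal (|u (x + h • e) - u x| ^ p x (x + h • e) /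
              |h| ^ (1 + s * p x (x + h • e))) := by
      intro s hs
      have h1s : 0 < 1 - s := by linarith
      simp only [hG_def]
      rw [← MeasureTheory.lintegral_const_mul' _ _ ENNReal.ofReal_ne_top,
          ← MeasureTheory.lintegral_const_mul' _ _ ENNReal.ofReal_ne_top]
      apply lintegral_mono
      intro x
      by_cases hc : c n x = 0
      · have hmf0 : mf n x = 0 := by
          rw [hmf_def]
          simp only [hc, Real.zero_rpow (hqη n x).ne', Real.zero_rpow (hqη' n x).ne', min_self]
      
        rw [hg_def]
        simp only [hmf0, mul_zero, zero_mul, zero_div, ENNReal.ofReal_zero]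
        exact zero_le
      · have hcpos : 0 < c n x := lt_of_le_of_ne (hcnn n x) (Ne.symm hc)
        have hax : x ∈ tsupport u := by
          by_contra hx
          have ha0 : a x = 0 := by rw [ha_def]; simp [hfd0 x hx]
          have : c n x = 0 := by
            rw [hc_def]; simp only [ha0, zero_sub]
            exact max_eq_right (neg_nonpos.mpr (mul_nonneg hM0 (hδpos n).le))
          exact hc this
        have hcax : 0 < a x - M * δ n := by
          by_contra hy
          push_neg at hy
          exact hc (by rw [hc_def]; exact max_eq_right hy)
        have hceq : c n x = a x - M * δ n := by rw [hc_def]; exact max_eq_left hcax.le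
        set E : ℝ := (1 - s) * (q x + η n) with hE_def
        have hE : 0 < E := mul_pos h1s (hqη n x)
        have hpoint : ∀ h : ℝ, h ≠ 0 → |h| < δ n →
            mf n x * |h| ^ (E - 1) ≤
              |u (x + h • e) - u x| ^ p x (x + h • e) /
                |h| ^ (1 + s * p x (x + h • e)) := by
          intro h hh0 hhδ
          have hq'b := hδp n x hax h hhδ.le
          have hq'lo : q x - η n ≤ p x (x + h • e) := by
            have := abs_le.mp hq'b; linarith [this.1]
          have hq'hi : p x (x + h • e) ≤ q x + η n := by
            have := abs_le.mp hq'b; linarith [this.2]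
          have hq'pos : 0 < p x (x + h • e) := by
            have := (hpbounds x (x + h • e)).1; linarith
          have ht0 : 0 < |h| := abs_pos.mpr hh0
          have ht1 : |h| ≤ 1 := le_trans hhδ.le (hδ1 n)
          have hA : c n x * |h| ≤ |u (x + h • e) - u x| := by
            rw [hceq]; exact htay x (δ n) (hδpos n).le h hhδ.le
          have step1 : mf n x ≤ (c n x) ^ p x (x + h • e) := by
            rcases le_total (c n x) 1 with h1 | h1
            · exact le_trans (min_le_left _ _)
                (Real.rpow_le_rpow_of_exponent_ge hcpos h1 hq'hi)
            · exact le_trans (min_le_right _ _)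
                (Real.rpow_le_rpow_of_exponent_le h1 hq'lo)
          have step2 : |h| ^ (E - 1) ≤ |h| ^ ((1 - s) * p x (x + h • e) - 1) := by
            apply Real.rpow_le_rpow_of_exponent_ge ht0 ht1
            have : (1 - s) * p x (x + h • e) ≤ (1 - s) * (q x + η n) :=
              mul_le_mul_of_nonneg_left hq'hi h1s.le
            rw [hE_def]; linarith
          have step3 : mf n x * |h| ^ (E - 1) ≤
              (c n x) ^ p x (x + h • e) * |h| ^ ((1 - s) * p x (x + h • e) - 1) :=
            mul_le_mul step1 step2 (Real.rpow_nonneg (abs_nonneg h) _)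
              (Real.rpow_nonneg hcpos.le _)
          have step4 : (c n x) ^ p x (x + h • e) * |h| ^ ((1 - s) * p x (x + h • e) - 1) =
              (c n x * |h|) ^ p x (x + h • e) / |h| ^ (1 + s * p x (x + h • e)) := by
            rw [Real.mul_rpow hcpos.le (abs_nonneg h), mul_div_assoc]
            congr 1
            rw [← Real.rpow_sub ht0]
            congr 1
            ring
          have step5 : (c n x * |h|) ^ p x (x + h • e) ≤
              |u (x + h • e) - u x| ^ p x (x + h • e) :=
            Real.rpow_le_rpow (mul_nonneg hcpos.le (abs_nonneg h)) hA hq'pos.le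
          calc mf n x * |h| ^ (E - 1)
              ≤ (c n x * |h|) ^ p x (x + h • e) / |h| ^ (1 + s * p x (x + h • e)) := by
                rw [← step4]; exact step3
            _ ≤ |u (x + h • e) - u x| ^ p x (x + h • e) /
                  |h| ^ (1 + s * p x (x + h • e)) := by gcongr
        have hposInt : ENNReal.ofReal (mf n x * (δ n ^ E / E)) ≤
            ∫⁻ h in Set.Ioo (0:ℝ) (δ n),
              ENNReal.ofReal (|u (x + h • e) - u x| ^ p x (x + h • e) /
                |h| ^ (1 + s * p x (x + h • e))) := by
          rw [← lint_Ioo_pos (hmfnn n x) (hδpos n) hE]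
          apply lintegral_mono_ae
          refine (ae_restrict_mem measurableSet_Ioo).mono fun h hh => ?_
          apply ENNReal.ofReal_le_ofReal
          calc mf n x * h ^ (E - 1) = mf n x * |h| ^ (E - 1) := by rw [abs_of_pos hh.1]
            _ ≤ _ := hpoint h (ne_of_gt hh.1) (by rw [abs_of_pos hh.1]; exact hh.2)
        have hnegInt : ENNReal.ofReal (mf n x * (δ n ^ E / E)) ≤
            ∫⁻ h in Set.Ioo (-(δ n)) (0:ℝ),
              ENNReal.ofReal (|u (x + h • e) - u x| ^ p x (x + h • e) /
                |h| ^ (1 + s * p x (x + h • e))) := by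
          rw [← lint_Ioo_neg (hmfnn n x) (hδpos n) hE]
          apply lintegral_mono_ae
          refine (ae_restrict_mem measurableSet_Ioo).mono fun h hh => ?_
          apply ENNReal.ofReal_le_ofReal
          have hhn : h < 0 := hh.2
          calc mf n x * (-h) ^ (E - 1) = mf n x * |h| ^ (E - 1) := by rw [abs_of_neg hhn]
            _ ≤ _ := hpoint h (ne_of_lt hhn) (by rw [abs_of_neg hhn]; linarith [hh.1])
        set V : ℝ := mf n x * (δ n ^ E / E) with hV_def
        have hVnn : 0 ≤ V := mul_nonneg (hmfnn n x)
          (div_nonneg (Real.rpow_nonneg (hδpos n).le _) hE.le)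
        have hdisj : Disjoint (Set.Ioo (-(δ n)) (0:ℝ)) (Set.Ioo (0:ℝ) (δ n)) := by
          apply Set.disjoint_left.mpr
          intro h h1 h2
          exact absurd h2.1 (not_lt.mpr h1.2.le)
        have hsum : ENNReal.ofReal V + ENNReal.ofReal V ≤
            ∫⁻ h : ℝ, ENNReal.ofReal (|u (x + h • e) - u x| ^ p x (x + h • e) /
              |h| ^ (1 + s * p x (x + h • e))) := by
          calc ENNReal.ofReal V + ENNReal.ofReal V
              ≤ (∫⁻ h in Set.Ioo (-(δ n)) (0:ℝ),
                  ENNReal.ofReal (|u (x + h • e) - u x| ^ p x (x + h • e) /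
                    |h| ^ (1 + s * p x (x + h • e)))) +
                ∫⁻ h in Set.Ioo (0:ℝ) (δ n),
                  ENNReal.ofReal (|u (x + h • e) - u x| ^ p x (x + h • e) /
                    |h| ^ (1 + s * p x (x + h • e))) := add_le_add hnegInt hposInt
            _ = ∫⁻ h in Set.Ioo (-(δ n)) (0:ℝ) ∪ Set.Ioo (0:ℝ) (δ n),
                  ENNReal.ofReal (|u (x + h • e) - u x| ^ p x (x + h • e) /
                    |h| ^ (1 + s * p x (x + h • e))) :=
                (lintegral_union measurableSet_Ioo hdisj).symm
            _ ≤ _ := setLIntegral_le_lintegral _ _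
        have hEP : E ≤ (1 - s) * (pM + η n) :=
          mul_le_mul_of_nonneg_left (add_le_add_left (hqpM x) _) h1s.le
        have hδPE : δ n ^ ((1 - s) * (pM + η n)) ≤ δ n ^ E :=
          Real.rpow_le_rpow_of_exponent_ge (hδpos n) (hδ1 n) hEP
        have hreal : δ n ^ ((1 - s) * (pM + η n)) * (2 * mf n x / (q x + η n)) ≤
            (1 - s) * (V + V) := by
          have heq : (1 - s) * (V + V) = δ n ^ E * (2 * mf n x / (q x + η n)) := by
            rw [hV_def, hE_def]
            field_simp [h1s.ne', (hqη n x).ne']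
            ring
          rw [heq]
          apply mul_le_mul_of_nonneg_right hδPE
          exact div_nonneg (mul_nonneg (by norm_num) (hmfnn n x)) (hqη n x).le
        calc ENNReal.ofReal (δ n ^ ((1 - s) * (pM + η n))) * g n x
            = ENNReal.ofReal (δ n ^ ((1 - s) * (pM + η n)) * (2 * mf n x / (q x + η n))) := by
              rw [hg_def, ← ENNReal.ofReal_mul (Real.rpow_nonneg (hδpos n).le _)]
          _ ≤ ENNReal.ofReal ((1 - s) * (V + V)) := ENNReal.ofReal_le_ofReal hreal
          _ = ENNReal.ofReal (1 - s) * (ENNReal.ofReal V + ENNReal.ofReal V) := by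
              rw [ENNReal.ofReal_mul h1s.le, ENNReal.ofReal_add hVnn hVnn]
          _ ≤ _ := mul_le_mul_right hsum _
    have hten : Filter.Tendsto
        (fun s : ℝ => ENNReal.ofReal (δ n ^ ((1 - s) * (pM + η n))) * G n)
        (𝓝[<] (1:ℝ)) (𝓝 (G n)) := by
      have hco : Continuous fun s : ℝ => δ n ^ ((1 - s) * (pM + η n)) :=
        continuous_const.rpow ((continuous_const.sub continuous_id).mul continuous_const)
          (fun s => Or.inl (hδpos n).ne')
      have h1 : Filter.Tendsto (fun s : ℝ => δ n ^ ((1 - s) * (pM + η n)))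
          (𝓝[<] (1:ℝ)) (𝓝 1) := by
        have := (hco.tendsto 1).mono_left (nhdsWithin_le_nhds : 𝓝[<] (1:ℝ) ≤ 𝓝 1)
        simpa using this
      have h2 : Filter.Tendsto (fun s : ℝ => ENNReal.ofReal (δ n ^ ((1 - s) * (pM + η n))))
          (𝓝[<] (1:ℝ)) (𝓝 1) := by
        have := (ENNReal.continuous_ofReal.tendsto 1).comp h1
        simpa [Function.comp_def] using this
      have := ENNReal.Tendsto.mul_const (b := G n) h2 (Or.inl one_ne_zero)
      simpa using this
    rw [hL_def, ← hten.liminf_eq]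
    exact Filter.liminf_le_liminf
      (by filter_upwards [self_mem_nhdsWithin] with s hs using hkey s hs)
  -- Claim 2 : LHS ≤ liminf G
  have hgm : ∀ n, Measurable (g n) := by
    intro n
    have hccont : Continuous (c n) :=
      ((hacont.sub continuous_const).max continuous_const)
    have hr1 : Continuous fun x => (c n x) ^ (q x + η n) := by
      rw [continuous_iff_continuousAt]; intro x
      exact ContinuousAt.rpow hccont.continuousAt
        (hqcont.continuousAt.add continuousAt_const) (Or.inr (hqη n x))
    have hr2 : Continuous fun x => (c n x) ^ (q x - η n) := by
      rw [continuous_iff_continuousAt]; intro x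
      exact ContinuousAt.rpow hccont.continuousAt
        (hqcont.continuousAt.sub continuousAt_const) (Or.inr (hqη' n x))
    have : Continuous fun x => 2 * mf n x / (q x + η n) :=
      (continuous_const.mul (hr1.min hr2)).div
        (hqcont.add continuous_const) (fun x => (hqη n x).ne')
    exact (ENNReal.continuous_ofReal.comp this).measurable
  have hδ0 : Filter.Tendsto δ atTop (𝓝 0) :=
    squeeze_zero (fun n => (hδpos n).le) hδsmall tendsto_one_div_add_atTop_nhds_zero_nat
  have hη0 : Filter.Tendsto η atTop (𝓝 0) :=
    squeeze_zero (fun n => (hηpos n).le) hηsmall tendsto_one_div_add_atTop_nhds_zero_nat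
  have hlim : ∀ x, Filter.Tendsto (fun n => g n x) atTop
      (𝓝 (ENNReal.ofReal (2 / q x * (a x) ^ (q x)))) := by
    intro x
    have hTeq : 2 / q x * (a x) ^ (q x) = 2 * (a x) ^ (q x) / q x := by ring
    rcases eq_or_lt_of_le (abs_nonneg (fderiv ℝ u x e)) with ha0 | ha0
    · have hax : a x = 0 := ha0.symm
      have hc0 : ∀ n, c n x = 0 := by
        intro n
        rw [hc_def]
        simp only [hax, zero_sub]
        exact max_eq_right (neg_nonpos.mpr (mul_nonneg hM0 (hδpos n).le))
      have hg0 : ∀ n, g n x = 0 := by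
        intro n
        rw [hg_def]
        simp only [hmf_def, hc0 n, Real.zero_rpow (hqη n x).ne',
          Real.zero_rpow (hqη' n x).ne', min_self, mul_zero, zero_div,
          ENNReal.ofReal_zero]
      have hT0 : 2 / q x * (a x) ^ (q x) = 0 := by
        rw [hax, Real.zero_rpow (hq0 x).ne', mul_zero]
      rw [hT0]
      simp only [ENNReal.ofReal_zero]
      simp only [hg0]
      exact tendsto_const_nhds
    · have hax : 0 < a x := ha0
      have hc : Filter.Tendsto (fun n => c n x) atTop (𝓝 (a x)) := by
        have h1 : Filter.Tendsto (fun n => max (a x - M * δ n) 0) atTop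
            (𝓝 (max (a x - M * 0) 0)) :=
          ((tendsto_const_nhds.sub (hδ0.const_mul M)).max tendsto_const_nhds)
        simpa [hc_def, mul_zero, sub_zero, max_eq_left hax.le] using h1
      have hq1 : Filter.Tendsto (fun n => q x + η n) atTop (𝓝 (q x)) := by
        simpa using tendsto_const_nhds.add hη0
      have hq2 : Filter.Tendsto (fun n => q x - η n) atTop (𝓝 (q x)) := by
        simpa using tendsto_const_nhds.sub hη0
      have hrc : ContinuousAt (fun z : ℝ × ℝ => z.1 ^ z.2) (a x, q x) :=
        Real.continuousAt_rpow _ (Or.inl hax.ne')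
      have hr1 : Filter.Tendsto (fun n => (c n x) ^ (q x + η n)) atTop (𝓝 ((a x) ^ (q x))) :=
        hrc.tendsto.comp (hc.prodMk_nhds hq1)
      have hr2 : Filter.Tendsto (fun n => (c n x) ^ (q x - η n)) atTop (𝓝 ((a x) ^ (q x))) :=
        hrc.tendsto.comp (hc.prodMk_nhds hq2)
      have hmin : Filter.Tendsto (fun n => mf n x) atTop (𝓝 ((a x) ^ (q x))) := by
        have := hr1.min hr2
        simpa [min_self] using this
      have hdiv : Filter.Tendsto (fun n => 2 * mf n x / (q x + η n)) atTop
          (𝓝 (2 * (a x) ^ (q x) / q x)) :=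
        (hmin.const_mul 2).div hq1 (hq0 x).ne'
      rw [hTeq]
      exact (ENNReal.continuous_ofReal.tendsto _).comp hdiv
  have hTcont : Continuous (fun x => 2 / q x * (a x) ^ (q x)) := by
    apply Continuous.mul
    · exact continuous_const.div hqcont fun x => (hq0 x).ne'
    · rw [continuous_iff_continuousAt]
      intro x
      exact ContinuousAt.rpow hacont.continuousAt hqcont.continuousAt (Or.inr (hq0 x))
  have hTsupp : HasCompactSupport (fun x => 2 / q x * (a x) ^ (q x)) := by
    apply HasCompactSupport.intro hcpt
    intro x hx
    have : a x = 0 := by rw [ha_def]; simp [hfd0 x hx]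
    simp [this, Real.zero_rpow (hq0 x).ne']
  have hTint : Integrable (fun x => 2 / q x * (a x) ^ (q x)) :=
    hTcont.integrable_of_hasCompactSupport hTsupp
  have hTnn : ∀ x, 0 ≤ 2 / q x * (a x) ^ (q x) := fun x =>
    mul_nonneg (div_nonneg (by norm_num) (hq0 x).le) (Real.rpow_nonneg (abs_nonneg _) _)
  rw [MeasureTheory.ofReal_integral_eq_lintegral_ofReal hTint
    (Filter.Eventually.of_forall hTnn)]
  calc ∫⁻ x, ENNReal.ofReal (2 / q x * (a x) ^ (q x))
      = ∫⁻ x, Filter.liminf (fun n => g n x) atTop :=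
        lintegral_congr fun x => ((hlim x).liminf_eq).symm
    _ ≤ Filter.liminf G atTop := lintegral_liminf_le hgm
    _ ≤ Filter.liminf (fun _ : ℕ => L) atTop :=
        Filter.liminf_le_liminf (Filter.Eventually.of_forall hGle)
    _ = L := Filter.liminf_const L

end
end

section
/- Let u ∈ C^2_c(ℝ^N) and p as above. Then for every x ∈ ℝ^N, lim_{s↑1} (1−s) ∫_ℝ |u(x+h e_1) − u(x)|^{p(x, x+h e_1)} |h|^{−1−s p(x, x+h e_1)} dh = (2/p̄(x)) |∂_1 u(x)|^{p̄(x)}. -/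
open MeasureTheory Real Filter Topology
open scoped ENNReal
open Set

noncomputable section

lemma integrableOn_neg_even {f : ℝ → ℝ} {s : Set ℝ} (hf : ∀ x, f (-x) = f x)
    (h : IntegrableOn f s) : IntegrableOn f (-s) := by
  have m : MeasurableEmbedding (fun x : ℝ => -x) := (Homeomorph.neg ℝ).measurableEmbedding
  have h2 : IntegrableOn f s (Measure.map (fun x : ℝ => -x) volume) := by
    rwa [Measure.map_neg_eq_self]
  have h3 := m.integrableOn_map_iff.mp h2
  simpa [Function.comp_def, hf, Set.neg_preimage] using h3

lemma integrableOn_abs_rpow_Icc {c β δ : ℝ} (hβ : 0 < β) (hδ : 0 < δ) :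
    IntegrableOn (fun h : ℝ => c * |h| ^ (β - 1)) (Icc (-δ) δ) := by
  have hpos : IntegrableOn (fun h : ℝ => c * |h| ^ (β - 1)) (Icc 0 δ) := by
    rw [integrableOn_Icc_iff_integrableOn_Ioc]
    have h1 : IntervalIntegrable (fun h : ℝ => h ^ (β - 1)) volume 0 δ :=
      intervalIntegral.intervalIntegrable_rpow' (by linarith)
    have h2 : IntegrableOn (fun h : ℝ => h ^ (β - 1)) (Ioc 0 δ) := by
      rwa [intervalIntegrable_iff_integrableOn_Ioc_of_le hδ.le] at h1
    have h3 : IntegrableOn (fun h : ℝ => c * h ^ (β - 1)) (Ioc 0 δ) := h2.const_mul c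
    refine h3.congr_fun (fun y hy => ?_) measurableSet_Ioc
    rw [abs_of_pos hy.1]
  have hneg : IntegrableOn (fun h : ℝ => c * |h| ^ (β - 1)) (Icc (-δ) 0) := by
    have := integrableOn_neg_even (f := fun h : ℝ => c * |h| ^ (β - 1))
      (fun x => by simp) hpos
    simpa [Set.neg_Icc] using this
  have : Icc (-δ) δ = Icc (-δ) 0 ∪ Icc 0 δ := (Icc_union_Icc_eq_Icc (by linarith) hδ.le).symm
  rw [this]
  exact hneg.union hpos

lemma core_lintegral {c β δ : ℝ} (hc : 0 ≤ c) (hβ : 0 < β) (hδ : 0 < δ) :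
    ∫⁻ h in {h : ℝ | |h| ≤ δ}, ENNReal.ofReal (c * |h| ^ (β - 1)) =
      ENNReal.ofReal (2 * c * δ ^ β / β) := by
  have hset : {h : ℝ | |h| ≤ δ} = Icc (-δ) δ := by ext h; simp [abs_le]
  have hint := integrableOn_abs_rpow_Icc (c := c) hβ hδ
  rw [hset, ← ofReal_integral_eq_lintegral_ofReal hint
    (Filter.Eventually.of_forall fun h => mul_nonneg hc (rpow_nonneg (abs_nonneg _) _))]
  congr 1
  have heq : ∫ h in Icc (-δ) δ, c * |h| ^ (β - 1)
      = ∫ h : ℝ, (Icc (-δ) δ).indicator (fun h => c * |h| ^ (β - 1)) h := by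
    rw [integral_indicator measurableSet_Icc]
  have hind : ∀ h : ℝ, (Icc (-δ) δ).indicator (fun h => c * |h| ^ (β - 1)) h
      = (fun t : ℝ => if t ≤ δ then c * t ^ (β - 1) else 0) |h| := by
    intro h
    show _ = if |h| ≤ δ then c * |h| ^ (β - 1) else 0
    simp only [Set.indicator_apply, mem_Icc]
    by_cases hh : |h| ≤ δ
    · rw [if_pos (abs_le.mp hh), if_pos hh]
    · rw [if_neg (fun hc' => hh (abs_le.mpr hc')), if_neg hh]
  rw [heq]
  simp_rw [hind]
  rw [integral_comp_abs (f := fun t : ℝ => if t ≤ δ then c * t ^ (β - 1) else 0)]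
  have h5 : ∫ t in Ioi (0:ℝ), (if t ≤ δ then c * t ^ (β - 1) else 0)
      = ∫ t in Ioc (0:ℝ) δ, c * t ^ (β - 1) := by
    rw [show (fun t : ℝ => if t ≤ δ then c * t ^ (β - 1) else 0)
        = (Iic δ).indicator (fun t => c * t ^ (β-1)) from rfl]
    rw [setIntegral_indicator measurableSet_Iic]
    rw [Set.Ioi_inter_Iic]
  rw [h5, ← intervalIntegral.integral_of_le hδ.le, intervalIntegral.integral_const_mul,
    integral_rpow (Or.inl (by linarith))]
  rw [sub_add_cancel, Real.zero_rpow hβ.ne', sub_zero]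
  ring


lemma integrableOn_neg_even' {f : ℝ → ℝ} {s : Set ℝ} (hf : ∀ x, f (-x) = f x)
    (h : IntegrableOn f s) : IntegrableOn f (-s) := by
  have m : MeasurableEmbedding (fun x : ℝ => -x) := (Homeomorph.neg ℝ).measurableEmbedding
  have h2 : IntegrableOn f s (Measure.map (fun x : ℝ => -x) volume) := by
    rwa [Measure.map_neg_eq_self]
  have h3 := m.integrableOn_map_iff.mp h2
  simpa [Function.comp_def, hf, Set.neg_preimage] using h3

lemma tail_lintegral_lt_top {K a : ℝ} (hK : 0 ≤ K) (ha : 1 < a) :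
    ∫⁻ h in {h : ℝ | 1 < |h|}, ENNReal.ofReal (K * |h| ^ (-a)) < ⊤ := by
  have hIoi : IntegrableOn (fun h : ℝ => K * |h| ^ (-a)) (Ioi 1) := by
    have h1 : IntegrableOn (fun h : ℝ => h ^ (-a)) (Ioi 1) :=
      integrableOn_Ioi_rpow_of_lt (by linarith) one_pos
    have h2 : IntegrableOn (fun h : ℝ => K * h ^ (-a)) (Ioi 1) := h1.const_mul K
    exact h2.congr_fun
      (fun y hy => by rw [abs_of_pos (lt_trans one_pos hy)]) measurableSet_Ioi
  have hIio : IntegrableOn (fun h : ℝ => K * |h| ^ (-a)) (Iio (-1)) := by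
    have := integrableOn_neg_even' (f := fun h : ℝ => K * |h| ^ (-a)) (fun x => by simp) hIoi
    simpa [Set.neg_Ioi] using this
  have hset : {h : ℝ | 1 < |h|} = Iio (-1) ∪ Ioi 1 := by
    ext h
    simp only [mem_setOf_eq, mem_union, mem_Iio, mem_Ioi, lt_abs, lt_neg]
    tauto
  have hint : IntegrableOn (fun h : ℝ => K * |h| ^ (-a)) {h : ℝ | 1 < |h|} := by
    rw [hset]; exact hIio.union hIoi
  rw [← ofReal_integral_eq_lintegral_ofReal hint
    (Filter.Eventually.of_forall fun h => mul_nonneg hK (rpow_nonneg (abs_nonneg _) _))]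
  exact ENNReal.ofReal_lt_top

theorem BBM_aux (P : ℝ → ℝ) (φ : ℝ → ℝ) (pm pM : ℝ) (hpm : 1 < pm)
    (hP : ∀ h, pm ≤ P h ∧ P h ≤ pM) (hPcont : ContinuousAt P 0)
    (M : ℝ) (hM : ∀ h, |φ h| ≤ M)
    (D : ℝ) (hD : HasDerivAt φ D 0) (hφ0 : φ 0 = 0) :
    Tendsto (fun s : ℝ => ENNReal.ofReal (1 - s) * ∫⁻ h : ℝ,
        ENNReal.ofReal (|φ h| ^ P h / |h| ^ (1 + s * P h)))
      (𝓝[<] 1) (𝓝 (ENNReal.ofReal (2 / P 0 * |D| ^ P 0))) := by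
  have hpm0 : (0:ℝ) < pm := lt_trans one_pos hpm
  set pb := P 0 with hpbdef
  have hpb1 : (1:ℝ) < pb := lt_of_lt_of_le hpm (hP 0).1
  have hpb0 : (0:ℝ) < pb := lt_trans one_pos hpb1
  have hpbM : pb ≤ pM := (hP 0).2
  set d := |D| with hddef
  have hd0 : (0:ℝ) ≤ d := abs_nonneg D
  set L : ℝ := 2 / pb * d ^ pb with hLdef
  have hL0 : (0:ℝ) ≤ L := mul_nonneg (by positivity) (rpow_nonneg hd0 _)
  have hM0 : (0:ℝ) ≤ M := le_trans (abs_nonneg _) (hM 0)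
  refine ENNReal.tendsto_nhds_of_Icc fun ε hε => ?_
  -- reduce to a real epsilon
  obtain ⟨e0, he0, hε'⟩ : ∃ e0 : ℝ, 0 < e0 ∧ ENNReal.ofReal e0 ≤ ε := by
    refine ⟨(min ε 1).toReal, ENNReal.toReal_pos (lt_min hε zero_lt_one).ne' (by simp), ?_⟩
    rw [ENNReal.ofReal_toReal (by simp : min ε 1 ≠ ⊤)]
    exact min_le_left _ _
  -- choose r (= t = η)
  obtain ⟨r, hr0, hrpb, hAr, hBr⟩ : ∃ r : ℝ, 0 < r ∧ r < (pb - 1) / 2 ∧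
      2 * max ((d + r) ^ (pb - r)) ((d + r) ^ (pb + r)) / (pb - r) < L + e0 / 4 ∧
      (d = 0 ∨ (r < d ∧ L - e0 / 4 < 2 * min ((d - r) ^ (pb - r)) ((d - r) ^ (pb + r)) / (pb + r))) := by
    have hrpow : ∀ c a : ℝ, (d + c * 0 ≠ 0 ∨ (0:ℝ) < pb + a * 0) →
        ContinuousAt (fun r : ℝ => (d + c * r) ^ (pb + a * r)) 0 := by
      intro c a hbase
      have h1 : ContinuousAt (fun q : ℝ × ℝ => q.1 ^ q.2) (d + c * 0, pb + a * 0) :=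
        continuousAt_rpow _ hbase
      have h2 : ContinuousAt (fun r : ℝ => ((d + c * r, pb + a * r) : ℝ × ℝ)) 0 := by fun_prop
      exact h1.comp_of_eq h2 rfl
    have hA : ContinuousAt (fun r : ℝ =>
        2 * max ((d + r) ^ (pb - r)) ((d + r) ^ (pb + r)) / (pb - r)) 0 := by
      have c1 := hrpow 1 (-1) (Or.inr (by simpa using hpb0))
      have c2 := hrpow 1 1 (Or.inr (by simpa using hpb0))
      simp only [one_mul, neg_one_mul, ← sub_eq_add_neg] at c1 c2
      exact (continuousAt_const.mul (c1.max c2)).div (by fun_prop) (by simp [hpb0.ne'])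
    have hA0 : 2 * max ((d + 0) ^ (pb - 0)) ((d + 0) ^ (pb + 0)) / (pb - 0) = L := by
      simp only [add_zero, sub_zero, max_self, hLdef]
      ring
    have hAt : Tendsto (fun r : ℝ =>
        2 * max ((d + r) ^ (pb - r)) ((d + r) ^ (pb + r)) / (pb - r)) (𝓝[>] (0:ℝ)) (𝓝 L) := by
      rw [← hA0]
      exact hA.tendsto.mono_left nhdsWithin_le_nhds
    have E1 := hAt.eventually_lt_const (by linarith : L < L + e0 / 4)
    have E2 : Ioo (0:ℝ) ((pb - 1) / 2) ∈ 𝓝[>] (0:ℝ) :=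
      Ioo_mem_nhdsGT_of_mem ⟨le_refl 0, by linarith⟩
    rcases eq_or_ne d 0 with hd | hd
    · obtain ⟨r, h1, h2⟩ := (E1.and E2).exists
      exact ⟨r, h2.1, h2.2, h1, Or.inl hd⟩
    · have hdpos : 0 < d := lt_of_le_of_ne hd0 (Ne.symm hd)
      have hB : ContinuousAt (fun r : ℝ =>
          2 * min ((d - r) ^ (pb - r)) ((d - r) ^ (pb + r)) / (pb + r)) 0 := by
        have c1 := hrpow (-1) (-1) (Or.inr (by simpa using hpb0))
        have c2 := hrpow (-1) 1 (Or.inr (by simpa using hpb0))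
        simp only [one_mul, neg_one_mul, ← sub_eq_add_neg] at c1 c2
        exact (continuousAt_const.mul (c1.min c2)).div (by fun_prop) (by simp [hpb0.ne'])
      have hB0 : 2 * min ((d - 0) ^ (pb - 0)) ((d - 0) ^ (pb + 0)) / (pb + 0) = L := by
        simp only [add_zero, sub_zero, min_self, hLdef]
        ring
      have hBt : Tendsto (fun r : ℝ =>
          2 * min ((d - r) ^ (pb - r)) ((d - r) ^ (pb + r)) / (pb + r)) (𝓝[>] (0:ℝ)) (𝓝 L) := by
        rw [← hB0]
        exact hB.tendsto.mono_left nhdsWithin_le_nhds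
      have E3 := hBt.eventually_const_lt (by linarith : L - e0 / 4 < L)
      have E4 : Ioo (0:ℝ) d ∈ 𝓝[>] (0:ℝ) := Ioo_mem_nhdsGT_of_mem ⟨le_refl 0, hdpos⟩
      obtain ⟨r, ⟨h1, h2⟩, h3, h4⟩ := ((E1.and E2).and (E3.and E4)).exists
      exact ⟨r, h2.1, h2.2, h1, Or.inr ⟨h4.2, h3⟩⟩
  set c₁ := max ((d + r) ^ (pb - r)) ((d + r) ^ (pb + r)) with hc1def
  have hc10 : 0 ≤ c₁ := le_trans (rpow_nonneg (by linarith) _) (le_max_left _ _)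
  have hpbr1 : (1:ℝ) < pb - r := by linarith
  have hpbr0 : (0:ℝ) < pb - r := by linarith
  have hpbr0' : (0:ℝ) < pb + r := by linarith
  have hder : ∀ᶠ h in 𝓝 (0:ℝ), |φ h - h * D| ≤ r * |h| := by
    have h1 := hasDerivAt_iff_isLittleO.mp hD
    have h2 := (Asymptotics.isLittleO_iff.mp h1) hr0
    filter_upwards [h2] with h hh
    simpa [hφ0, Real.norm_eq_abs, smul_eq_mul, mul_comm] using hh
  have hPev : ∀ᶠ h in 𝓝 (0:ℝ), |P h - pb| ≤ r := by
    have h2 := Metric.tendsto_nhds.mp hPcont.tendsto r hr0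
    filter_upwards [h2] with h hh
    rw [Real.dist_eq] at hh; exact hh.le
  obtain ⟨δ', hδ'0, hδ'⟩ := Metric.eventually_nhds_iff.mp (hder.and hPev)
  set δ := min (min (δ' / 2) 1) (1 / (d + r)) with hδdef
  have hδ0 : 0 < δ := lt_min (lt_min (by linarith) one_pos) (by positivity)
  have hδ1 : δ ≤ 1 := le_trans (min_le_left _ _) (min_le_right _ _)
  have hδdr : (d + r) * δ ≤ 1 := by
    have h1 : δ ≤ 1 / (d + r) := min_le_right _ _
    rw [le_div_iff₀ (by linarith)] at h1
    linarith
  have hδδ' : ∀ h : ℝ, |h| ≤ δ → (|φ h - h * D| ≤ r * |h| ∧ |P h - pb| ≤ r) := by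
    intro h hh
    apply hδ'
    rw [Real.dist_eq, sub_zero]
    calc |h| ≤ δ := hh
      _ ≤ δ' / 2 := le_trans (min_le_left _ _) (min_le_left _ _)
      _ < δ' := by linarith
  have hφub : ∀ h : ℝ, |h| ≤ δ → |φ h| ≤ (d + r) * |h| := by
    intro h hh
    have h1 := (hδδ' h hh).1
    calc |φ h| = |h * D + (φ h - h * D)| := by congr 1; ring
      _ ≤ |h * D| + |φ h - h * D| := abs_add_le _ _
      _ ≤ |h| * d + r * |h| := add_le_add (le_of_eq (abs_mul h D)) h1
      _ = (d + r) * |h| := by ring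
  have hφlb : ∀ h : ℝ, |h| ≤ δ → (d - r) * |h| ≤ |φ h| := by
    intro h hh
    have h1 := (hδδ' h hh).1
    have h3 : |h * D| ≤ |φ h| + |h * D - φ h| := by
      calc |h * D| = |φ h + (h * D - φ h)| := by congr 1; ring
        _ ≤ _ := abs_add_le _ _
    have h4 : |h * D - φ h| = |φ h - h * D| := abs_sub_comm _ _
    have h5 : |h * D| = |h| * d := abs_mul h D
    nlinarith
  have hPb : ∀ h : ℝ, |h| ≤ δ → pb - r ≤ P h ∧ P h ≤ pb + r := by
    intro h hh
    have := abs_le.mp (hδδ' h hh).2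
    constructor <;> linarith [this.1, this.2]
  have hPpos : ∀ h : ℝ, 0 < P h := fun h => lt_of_lt_of_le hpm0 (hP h).1
  -- pointwise upper bound on the inner region
  have hptUB : ∀ s : ℝ, s ∈ Ioo (1/2:ℝ) 1 → ∀ h : ℝ, |h| ≤ δ →
      |φ h| ^ P h / |h| ^ (1 + s * P h) ≤ c₁ * |h| ^ ((1 - s) * (pb - r) - 1) := by
    intro s hs h hh
    rcases eq_or_ne h 0 with h0 | h0
    · rw [h0]
      simp only [hφ0, abs_zero]
      rw [Real.zero_rpow (hPpos 0).ne', zero_div]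
      exact mul_nonneg hc10 (rpow_nonneg le_rfl _)
    · have hh0 : 0 < |h| := abs_pos.mpr h0
      have hh1 : |h| ≤ 1 := le_trans hh hδ1
      have hden : 0 < |h| ^ (1 + s * P h) := rpow_pos_of_pos hh0 _
      have hs0 : 0 < 1 - s := by linarith [hs.2]
      have step1 : |φ h| ^ P h ≤ (d + r) ^ P h * |h| ^ P h := by
        rw [← Real.mul_rpow (by linarith) (abs_nonneg h)]
        exact Real.rpow_le_rpow (abs_nonneg _) (hφub h hh) (hPpos h).le
      have step3 : (d + r) ^ P h ≤ c₁ := by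
        rcases le_or_gt (d + r) 1 with hc | hc
        · exact le_trans (Real.rpow_le_rpow_of_exponent_ge (by linarith) hc (hPb h hh).1)
            (le_max_left _ _)
        · exact le_trans (Real.rpow_le_rpow_of_exponent_le hc.le (hPb h hh).2)
            (le_max_right _ _)
      have step4 : |h| ^ P h / |h| ^ (1 + s * P h) = |h| ^ ((1 - s) * P h - 1) := by
        rw [← Real.rpow_sub hh0]
        congr 1
        ring
      have step5 : |h| ^ ((1 - s) * P h - 1) ≤ |h| ^ ((1 - s) * (pb - r) - 1) := by
        apply Real.rpow_le_rpow_of_exponent_ge hh0 hh1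
        have := mul_le_mul_of_nonneg_left (hPb h hh).1 hs0.le
        linarith
      calc |φ h| ^ P h / |h| ^ (1 + s * P h)
          ≤ ((d + r) ^ P h * |h| ^ P h) / |h| ^ (1 + s * P h) :=
            (div_le_div_iff_of_pos_right hden).mpr step1
        _ = (d + r) ^ P h * (|h| ^ P h / |h| ^ (1 + s * P h)) := mul_div_assoc _ _ _
        _ = (d + r) ^ P h * |h| ^ ((1 - s) * P h - 1) := by rw [step4]
        _ ≤ c₁ * |h| ^ ((1 - s) * (pb - r) - 1) :=
            mul_le_mul step3 step5 (rpow_nonneg (abs_nonneg h) _) hc10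
  set c₂ := min ((d - r) ^ (pb - r)) ((d - r) ^ (pb + r)) with hc2def
  have hptLB : ∀ s : ℝ, s ∈ Ioo (1/2:ℝ) 1 → r < d → ∀ h : ℝ, |h| ≤ δ → h ≠ 0 →
      c₂ * |h| ^ ((1 - s) * (pb + r) - 1) ≤ |φ h| ^ P h / |h| ^ (1 + s * P h) := by
    intro s hs hrd h hh h0
    have hh0 : 0 < |h| := abs_pos.mpr h0
    have hh1 : |h| ≤ 1 := le_trans hh hδ1
    have hden : 0 < |h| ^ (1 + s * P h) := rpow_pos_of_pos hh0 _
    have hs0 : 0 < 1 - s := by linarith [hs.2]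
    have hdr0 : 0 < d - r := by linarith
    have step1 : (d - r) ^ P h * |h| ^ P h ≤ |φ h| ^ P h := by
      rw [← Real.mul_rpow hdr0.le (abs_nonneg h)]
      exact Real.rpow_le_rpow (mul_nonneg hdr0.le (abs_nonneg h)) (hφlb h hh) (hPpos h).le
    have step3 : c₂ ≤ (d - r) ^ P h := by
      rcases le_or_gt (d - r) 1 with hc | hc
      · exact le_trans (min_le_right _ _)
          (Real.rpow_le_rpow_of_exponent_ge hdr0 hc (hPb h hh).2)
      · exact le_trans (min_le_left _ _)
          (Real.rpow_le_rpow_of_exponent_le hc.le (hPb h hh).1)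
    have step4 : |h| ^ P h / |h| ^ (1 + s * P h) = |h| ^ ((1 - s) * P h - 1) := by
      rw [← Real.rpow_sub hh0]; congr 1; ring
    have step5 : |h| ^ ((1 - s) * (pb + r) - 1) ≤ |h| ^ ((1 - s) * P h - 1) := by
      apply Real.rpow_le_rpow_of_exponent_ge hh0 hh1
      have := mul_le_mul_of_nonneg_left (hPb h hh).2 hs0.le
      linarith
    calc c₂ * |h| ^ ((1 - s) * (pb + r) - 1)
        ≤ (d - r) ^ P h * |h| ^ ((1 - s) * P h - 1) :=
          mul_le_mul step3 step5 (rpow_nonneg (abs_nonneg h) _) (rpow_nonneg hdr0.le _)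
      _ = (d - r) ^ P h * (|h| ^ P h / |h| ^ (1 + s * P h)) := by rw [step4]
      _ = ((d - r) ^ P h * |h| ^ P h) / |h| ^ (1 + s * P h) := (mul_div_assoc _ _ _).symm
      _ ≤ |φ h| ^ P h / |h| ^ (1 + s * P h) := (div_le_div_iff_of_pos_right hden).mpr step1
  -- tail bound constants
  have hpMm : pm ≤ pM := le_trans (hP 0).1 (hP 0).2
  set K₁ := (2 * M + 1) ^ pM with hK1def
  have hB1 : (1:ℝ) ≤ 2 * M + 1 := by linarith
  have hK10 : (0:ℝ) ≤ K₁ := rpow_nonneg (by linarith) _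
  have hnum : ∀ h : ℝ, |φ h| ^ P h ≤ K₁ := by
    intro h
    calc |φ h| ^ P h ≤ (2 * M + 1) ^ P h :=
        Real.rpow_le_rpow (abs_nonneg _) (by linarith [hM h]) (hPpos h).le
      _ ≤ K₁ := Real.rpow_le_rpow_of_exponent_le hB1 (hP h).2
  have hSm : MeasurableSet {h : ℝ | |h| ≤ δ} := by
    have hset : {h : ℝ | |h| ≤ δ} = Icc (-δ) δ := by ext h; simp [abs_le]
    rw [hset]; exact measurableSet_Icc
  have hT1m : MeasurableSet {h : ℝ | δ < |h| ∧ |h| ≤ 1} :=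
    measurable_id.abs measurableSet_Ioc
  have hT2m : MeasurableSet {h : ℝ | 1 < |h|} :=
    measurable_id.abs measurableSet_Ioi
  set Cδ : ℝ≥0∞ := ENNReal.ofReal (K₁ / δ ^ (1 + pM)) * volume (Icc (-1:ℝ) 1)
      + ∫⁻ h in {h : ℝ | 1 < |h|}, ENNReal.ofReal (K₁ * |h| ^ (-(1 + pm / 2))) with hCdef
  have hCtop : Cδ ≠ ⊤ := by
    refine ENNReal.add_ne_top.mpr ⟨ENNReal.mul_ne_top ENNReal.ofReal_ne_top ?_, ?_⟩
    · rw [Real.volume_Icc]; exact ENNReal.ofReal_ne_top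
    · exact (tail_lintegral_lt_top hK10 (by linarith)).ne
  have htail : ∀ s : ℝ, s ∈ Ioo (1/2:ℝ) 1 →
      (∫⁻ h in {h : ℝ | |h| ≤ δ}ᶜ, ENNReal.ofReal (|φ h| ^ P h / |h| ^ (1 + s * P h))) ≤ Cδ := by
    intro s hs
    have hsub : {h : ℝ | |h| ≤ δ}ᶜ ⊆ {h : ℝ | δ < |h| ∧ |h| ≤ 1} ∪ {h : ℝ | 1 < |h|} := by
      intro h hh
      simp only [mem_compl_iff, mem_setOf_eq, not_le] at hh
      by_cases h1 : |h| ≤ 1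
      · exact Or.inl ⟨hh, h1⟩
      · exact Or.inr (lt_of_not_ge h1)
    refine le_trans (lintegral_mono_set hsub) (le_trans (lintegral_union_le _ _ _) (add_le_add ?_ ?_))
    · have hpt : ∀ h ∈ {h : ℝ | δ < |h| ∧ |h| ≤ 1},
          ENNReal.ofReal (|φ h| ^ P h / |h| ^ (1 + s * P h))
            ≤ (fun _ : ℝ => ENNReal.ofReal (K₁ / δ ^ (1 + pM))) h := by
        intro h hh
        refine ENNReal.ofReal_le_ofReal (div_le_div₀ hK10 (hnum h) (rpow_pos_of_pos hδ0 _) ?_)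
        have hh0 : 0 < |h| := lt_trans hδ0 hh.1
        have e1 : δ ^ (1 + pM) ≤ |h| ^ (1 + pM) :=
          Real.rpow_le_rpow hδ0.le hh.1.le (by linarith)
        have e2 : |h| ^ (1 + pM) ≤ |h| ^ (1 + s * P h) := by
          apply Real.rpow_le_rpow_of_exponent_ge hh0 hh.2
          have h3 : s * P h ≤ P h := mul_le_of_le_one_left (hPpos h).le hs.2.le
          linarith [(hP h).2]
        linarith
      refine le_trans (setLIntegral_mono' hT1m hpt) ?_
      rw [setLIntegral_const]
      refine mul_le_mul_right (measure_mono fun h hh => ?_) _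
      have := abs_le.mp hh.2
      exact mem_Icc.mpr this
    · refine setLIntegral_mono' hT2m fun h hh => ?_
      have hh1 : (1:ℝ) < |h| := hh
      have hh0 : (0:ℝ) < |h| := lt_trans one_pos hh1
      refine ENNReal.ofReal_le_ofReal ?_
      rw [Real.rpow_neg (abs_nonneg h), ← div_eq_mul_inv]
      refine div_le_div₀ hK10 (hnum h) (rpow_pos_of_pos hh0 _) ?_
      apply Real.rpow_le_rpow_of_exponent_le hh1.le
      have h3 : 1/2 * pm ≤ s * P h :=
        mul_le_mul hs.1.le (hP h).1 hpm0.le (by linarith [hs.1])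
      linarith
  -- integral-level bounds
  have hIUB : ∀ s : ℝ, s ∈ Ioo (1/2:ℝ) 1 →
      (∫⁻ h in {h : ℝ | |h| ≤ δ}, ENNReal.ofReal (|φ h| ^ P h / |h| ^ (1 + s * P h)))
        ≤ ENNReal.ofReal (2 * c₁ * δ ^ ((1 - s) * (pb - r)) / ((1 - s) * (pb - r))) := by
    intro s hs
    have hβ : 0 < (1 - s) * (pb - r) := mul_pos (by linarith [hs.2]) hpbr0
    have hc := core_lintegral (c := c₁) (β := (1 - s) * (pb - r)) (δ := δ) hc10 hβ hδ0
    rw [← hc]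
    exact setLIntegral_mono' hSm fun h hh => ENNReal.ofReal_le_ofReal (hptUB s hs h hh)
  have hILB : ∀ s : ℝ, s ∈ Ioo (1/2:ℝ) 1 → r < d →
      ENNReal.ofReal (2 * c₂ * δ ^ ((1 - s) * (pb + r)) / ((1 - s) * (pb + r)))
        ≤ ∫⁻ h : ℝ, ENNReal.ofReal (|φ h| ^ P h / |h| ^ (1 + s * P h)) := by
    intro s hs hrd
    have hβ : 0 < (1 - s) * (pb + r) := mul_pos (by linarith [hs.2]) hpbr0'
    have hc20 : (0:ℝ) ≤ c₂ := le_min (rpow_nonneg (by linarith) _) (rpow_nonneg (by linarith) _)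
    rw [← core_lintegral (c := c₂) hc20 hβ hδ0]
    refine le_trans (setLIntegral_mono_ae' hSm ?_) (setLIntegral_le_lintegral _ _)
    have hane : ∀ᵐ h : ℝ, h ≠ (0:ℝ) := by
      rw [ae_iff]
      simp only [ne_eq, not_not, setOf_eq_eq_singleton]
      exact measure_singleton 0
    filter_upwards [hane] with h h0 hh
    exact ENNReal.ofReal_le_ofReal (hptLB s hs hrd h hh h0)
  -- eventual facts in the filter 𝓝[<] 1
  have Ev0 : ∀ᶠ s in 𝓝[<] (1:ℝ), s ∈ Ioo (1/2:ℝ) 1 :=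
    Ioo_mem_nhdsLT_of_mem ⟨by norm_num, le_refl (1:ℝ)⟩
  have EvU : ∀ᶠ s in 𝓝[<] (1:ℝ),
      2 * c₁ * δ ^ ((1 - s) * (pb - r)) / (pb - r) < L + e0 / 2 := by
    have h1 : ContinuousAt (fun y : ℝ => δ ^ y) ((1 - 1) * (pb - r)) :=
      continuousAt_const_rpow hδ0.ne'
    have h2 : ContinuousAt (fun s : ℝ => (1 - s) * (pb - r)) 1 := by fun_prop
    have hcont : ContinuousAt (fun s : ℝ => 2 * c₁ * δ ^ ((1 - s) * (pb - r)) / (pb - r)) 1 :=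
      (continuousAt_const.mul (h1.comp_of_eq h2 rfl)).div continuousAt_const hpbr0.ne'
    have ht := hcont.tendsto.mono_left (nhdsWithin_le_nhds (s := Iio (1:ℝ)))
    refine ht.eventually_lt_const ?_
    show 2 * c₁ * δ ^ ((1 - 1) * (pb - r)) / (pb - r) < L + e0 / 2
    rw [show ((1:ℝ) - 1) * (pb - r) = 0 by ring, Real.rpow_zero, mul_one]
    linarith
  have EvT : ∀ᶠ s in 𝓝[<] (1:ℝ), ENNReal.ofReal (1 - s) * Cδ ≤ ENNReal.ofReal (e0 / 4) := by
    have h2 : Tendsto (fun s : ℝ => (1:ℝ) - s) (𝓝 1) (𝓝 0) := by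
      have := Continuous.tendsto (show Continuous fun s : ℝ => (1:ℝ) - s by fun_prop) 1
      simpa using this
    have h3 := (ENNReal.continuous_ofReal.tendsto 0).comp h2
    have h1 : Tendsto (fun s : ℝ => ENNReal.ofReal (1 - s)) (𝓝[<] (1:ℝ)) (𝓝 0) := by
      simpa [Function.comp_def] using h3.mono_left (nhdsWithin_le_nhds (s := Iio (1:ℝ)))
    have h4 := ENNReal.Tendsto.mul_const h1 (Or.inr hCtop)
    rw [zero_mul] at h4
    exact (ENNReal.tendsto_nhds_zero.mp h4) _ (ENNReal.ofReal_pos.mpr (by linarith))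
  have EvL : ∀ᶠ s in 𝓝[<] (1:ℝ), ENNReal.ofReal L - ENNReal.ofReal e0 ≤
      ENNReal.ofReal (1 - s) * ∫⁻ h : ℝ, ENNReal.ofReal (|φ h| ^ P h / |h| ^ (1 + s * P h)) := by
    rcases hBr with hd' | ⟨hrd, hBr'⟩
    · refine Eventually.of_forall fun s => ?_
      have hLz : L = 0 := by rw [hLdef, hd', Real.zero_rpow hpb0.ne', mul_zero]
      rw [hLz]
      simp
    · have h1 : ContinuousAt (fun y : ℝ => δ ^ y) ((1 - 1) * (pb + r)) :=
        continuousAt_const_rpow hδ0.ne'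
      have h2 : ContinuousAt (fun s : ℝ => (1 - s) * (pb + r)) 1 := by fun_prop
      have hcont : ContinuousAt (fun s : ℝ => 2 * c₂ * δ ^ ((1 - s) * (pb + r)) / (pb + r)) 1 :=
        (continuousAt_const.mul (h1.comp_of_eq h2 rfl)).div continuousAt_const hpbr0'.ne'
      have ht := hcont.tendsto.mono_left (nhdsWithin_le_nhds (s := Iio (1:ℝ)))
      have hev2 : ∀ᶠ s in 𝓝[<] (1:ℝ),
          L - e0 / 2 < 2 * c₂ * δ ^ ((1 - s) * (pb + r)) / (pb + r) := by
        refine ht.eventually_const_lt ?_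
        show L - e0 / 2 < 2 * c₂ * δ ^ ((1 - 1) * (pb + r)) / (pb + r)
        rw [show ((1:ℝ) - 1) * (pb + r) = 0 by ring, Real.rpow_zero, mul_one]
        linarith
      filter_upwards [hev2, Ev0] with s hg hs
      have hs0 : (0:ℝ) < 1 - s := by linarith [hs.2]
      calc ENNReal.ofReal L - ENNReal.ofReal e0 = ENNReal.ofReal (L - e0) :=
            (ENNReal.ofReal_sub L he0.le).symm
        _ ≤ ENNReal.ofReal ((1 - s) * (2 * c₂ * δ ^ ((1 - s) * (pb + r)) / ((1 - s) * (pb + r)))) := by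
            apply ENNReal.ofReal_le_ofReal
            have hid : (1 - s) * (2 * c₂ * δ ^ ((1 - s) * (pb + r)) / ((1 - s) * (pb + r)))
                = 2 * c₂ * δ ^ ((1 - s) * (pb + r)) / (pb + r) := by
              rw [← mul_div_assoc, mul_div_mul_left _ _ hs0.ne']
            rw [hid]
            linarith
        _ = ENNReal.ofReal (1 - s) *
              ENNReal.ofReal (2 * c₂ * δ ^ ((1 - s) * (pb + r)) / ((1 - s) * (pb + r))) :=
            ENNReal.ofReal_mul hs0.le
        _ ≤ _ := mul_le_mul_right (hILB s hs hrd) _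
  filter_upwards [Ev0, EvU, EvT, EvL] with s hs hU hT hLow
  have hs0 : (0:ℝ) < 1 - s := by linarith [hs.2]
  constructor
  · exact le_trans (tsub_le_tsub_left hε' _) hLow
  · have hsplit : (∫⁻ h : ℝ, ENNReal.ofReal (|φ h| ^ P h / |h| ^ (1 + s * P h)))
        = (∫⁻ h in {h : ℝ | |h| ≤ δ}, ENNReal.ofReal (|φ h| ^ P h / |h| ^ (1 + s * P h)))
          + ∫⁻ h in {h : ℝ | |h| ≤ δ}ᶜ, ENNReal.ofReal (|φ h| ^ P h / |h| ^ (1 + s * P h)) :=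
      (lintegral_add_compl _ hSm).symm
    calc ENNReal.ofReal (1 - s) * ∫⁻ h : ℝ, ENNReal.ofReal (|φ h| ^ P h / |h| ^ (1 + s * P h))
        = ENNReal.ofReal (1 - s) *
            (∫⁻ h in {h : ℝ | |h| ≤ δ}, ENNReal.ofReal (|φ h| ^ P h / |h| ^ (1 + s * P h)))
          + ENNReal.ofReal (1 - s) *
            ∫⁻ h in {h : ℝ | |h| ≤ δ}ᶜ, ENNReal.ofReal (|φ h| ^ P h / |h| ^ (1 + s * P h)) := by
          rw [hsplit, mul_add]
      _ ≤ ENNReal.ofReal (1 - s) *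
            ENNReal.ofReal (2 * c₁ * δ ^ ((1 - s) * (pb - r)) / ((1 - s) * (pb - r)))
          + ENNReal.ofReal (e0 / 4) :=
          add_le_add (mul_le_mul_right (hIUB s hs) _)
            (le_trans (mul_le_mul_right (htail s hs) _) hT)
      _ = ENNReal.ofReal ((1 - s) * (2 * c₁ * δ ^ ((1 - s) * (pb - r)) / ((1 - s) * (pb - r))))
          + ENNReal.ofReal (e0 / 4) := by rw [ENNReal.ofReal_mul hs0.le]
      _ ≤ ENNReal.ofReal (L + e0 / 2) + ENNReal.ofReal (e0 / 4) := by
          refine add_le_add (ENNReal.ofReal_le_ofReal ?_) le_rfl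
          have hid : (1 - s) * (2 * c₁ * δ ^ ((1 - s) * (pb - r)) / ((1 - s) * (pb - r)))
              = 2 * c₁ * δ ^ ((1 - s) * (pb - r)) / (pb - r) := by
            rw [← mul_div_assoc, mul_div_mul_left _ _ hs0.ne']
          rw [hid]
          linarith
      _ ≤ ENNReal.ofReal L + ε := by
          rw [← ENNReal.ofReal_add (by linarith) (by linarith)]
          refine le_trans (ENNReal.ofReal_le_ofReal (by linarith : L + e0/2 + e0/4 ≤ L + e0)) ?_
          rw [ENNReal.ofReal_add hL0 he0.le]
          exact add_le_add le_rfl hε'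


theorem varExp_BBM_pointwise_limit (N : ℕ) (hN : 0 < N)
    (p : (Fin N → ℝ) → (Fin N → ℝ) → ℝ)
    (hpcont : Continuous fun q : (Fin N → ℝ) × (Fin N → ℝ) => p q.1 q.2)
    (hpsymm : ∀ x y, p x y = p y x)
    (pm pM : ℝ) (hpm : 1 < pm)
    (hpbounds : ∀ x y, pm ≤ p x y ∧ p x y ≤ pM)
    (u : (Fin N → ℝ) → ℝ) (hu : ContDiff ℝ 2 u) (hcpt : HasCompactSupport u)
    (x : Fin N → ℝ) :
    Tendsto (fun s : ℝ =>
        ENNReal.ofReal (1 - s) * ∫⁻ h : ℝ,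
          ENNReal.ofReal (|u (x + h • stdBasis N ⟨0, hN⟩) - u x| ^
              p x (x + h • stdBasis N ⟨0, hN⟩) /
            |h| ^ (1 + s * p x (x + h • stdBasis N ⟨0, hN⟩))))
      (𝓝[<] 1)
      (𝓝 (ENNReal.ofReal (2 / p x x *
        |fderiv ℝ u x (stdBasis N ⟨0, hN⟩)| ^ p x x))) := by
  set e := stdBasis N ⟨0, hN⟩ with he
  have hzero : x + (0:ℝ) • e = x := by rw [zero_smul, add_zero]
  obtain ⟨M, hMb⟩ := hcpt.exists_bound_of_continuous hu.continuous
  have hPcont : ContinuousAt (fun h : ℝ => p x (x + h • e)) 0 := by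
    have hc : Continuous fun h : ℝ => p x (x + h • e) :=
      hpcont.comp (continuous_const.prodMk
        (continuous_const.add (continuous_id.smul continuous_const)))
    exact hc.continuousAt
  have hD : HasDerivAt (fun h : ℝ => u (x + h • e) - u x) (fderiv ℝ u x e) 0 := by
    have hdiff : HasFDerivAt u (fderiv ℝ u x) (x + (0:ℝ) • e) := by
      rw [hzero]
      exact (hu.differentiable (by norm_num) x).hasFDerivAt
    have hline : HasDerivAt (fun h : ℝ => x + h • e) e 0 := by
      simpa using ((hasDerivAt_id (0:ℝ)).smul_const e).const_add x
    have hcomp := hdiff.comp_hasDerivAt 0 hline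
    exact hcomp.sub_const (u x)
  have hMbd : ∀ h : ℝ, |u (x + h • e) - u x| ≤ 2 * M := by
    intro h
    have h1 := hMb (x + h • e)
    have h2 := hMb x
    rw [Real.norm_eq_abs] at h1 h2
    calc |u (x + h • e) - u x| ≤ |u (x + h • e)| + |u x| := abs_sub _ _
      _ ≤ 2 * M := by linarith
  have key := BBM_aux (fun h : ℝ => p x (x + h • e)) (fun h : ℝ => u (x + h • e) - u x)
    pm pM hpm (fun h => hpbounds x _) hPcont (2 * M) hMbd
    (fderiv ℝ u x e) hD (by simp)
  simpa only [hzero] using key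

end
end
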